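/- arXiv:math/0611664 — 5 statements merged into one kernel-verified Lean document; each statement's English description precedes it below -/
import Mathlib

section
/- Let s > 0 and let X_s* := max{X₁, …, X_{N(s)}} (the maximum of an empty set being 0). Then for every c ≥ 0, E[(X_s* − c)⁺] ≤ s·E[(X − c)⁺]; moreover the inequality is strict if P(X > c) > 0. -/
open MeasureTheory ProbabilityTheory Real Set

noncomputable section

namespace ProphetPoisson

variable {Ω : Type*} [MeasurableSpace Ω]

/-- `arrival T k` is the arrival time `S_{k+1} = T₀ + ⋯ + T_k` of the `k`-th observation
(observations are indexed by `k = 0, 1, 2, …`). -/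
def arrival (T : ℕ → Ω → ℝ) (k : ℕ) (ω : Ω) : ℝ :=
  ∑ i ∈ Finset.range (k + 1), T i ω

/-- The maximum of all observations `X k` arriving by time `t`
(the maximum of an empty set being `0`); for nonnegative observations this is
`⨆ k, X k · 1(S k ≤ t)`. -/
def maxByT (X T : ℕ → Ω → ℝ) (t : ℝ) (ω : Ω) : ℝ :=
  ⨆ k : ℕ, if arrival T k ω ≤ t then X k ω else 0

/-- `M(t)`: the expected maximum of the observations arriving by time `t`. -/
def Mval (μ : Measure Ω) (X T : ℕ → Ω → ℝ) (t : ℝ) : ℝ :=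
  ∫ ω, maxByT X T t ω ∂μ

/-- The σ-algebra generated by `(X 0, S 0), …, (X i, S i)`. -/
def obsFiltration (X T : ℕ → Ω → ℝ) (i : ℕ) : MeasurableSpace Ω :=
  ⨆ j ∈ Finset.range (i + 1),
    MeasurableSpace.comap (fun ω => (X j ω, arrival T j ω)) inferInstance

/-- A stopping rule: an `ℕ`-valued random variable `τ` such that `{τ = i}` is
measurable w.r.t. the σ-algebra generated by `(X 0, S 0), …, (X i, S i)`. -/
def IsStopRule (X T : ℕ → Ω → ℝ) (τ : Ω → ℕ) : Prop :=
  ∀ i : ℕ, MeasurableSet[obsFiltration X T i] {ω | τ ω = i}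

/-- The reward `X_τ · 1(S_τ ≤ t)` of a stopping rule `τ`. -/
def stopReward (X T : ℕ → Ω → ℝ) (t : ℝ) (τ : Ω → ℕ) (ω : Ω) : ℝ :=
  if arrival T (τ ω) ω ≤ t then X (τ ω) ω else 0

/-- `V(t)`: the optimal stopping value `sup_τ E[X_τ 1(S_τ ≤ t)]`. -/
def Vval (μ : Measure Ω) (X T : ℕ → Ω → ℝ) (t : ℝ) : ℝ :=
  sSup {v | ∃ τ : Ω → ℕ, IsStopRule X T τ ∧ v = ∫ ω, stopReward X T t τ ω ∂μ}

/-- The threshold rule `τ(c) = inf {n : X n ≥ c}`. -/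
def tauC (X : ℕ → Ω → ℝ) (c : ℝ) (ω : Ω) : ℕ := sInf {n : ℕ | c ≤ X n ω}

/-- `W_c(t)`: the expected reward of the threshold rule `τ(c)`. -/
def Wval (μ : Measure Ω) (X T : ℕ → Ω → ℝ) (c t : ℝ) : ℝ :=
  ∫ ω, stopReward X T t (tauC X c) ω ∂μ

/-- `sup_{c ≥ 0} W_c(t)`. -/
def supW (μ : Measure Ω) (X T : ℕ → Ω → ℝ) (t : ℝ) : ℝ :=
  sSup {w | ∃ c : ℝ, 0 ≤ c ∧ w = Wval μ X T c t}

/-- The basic probabilistic setup: `μ` is a probability measure; the `X k` are i.i.d.;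
the `T k` are i.i.d. exponential with rate `1`; and all of the `X k, T k` are jointly
independent (in particular the sequence `{X k}` is independent of the arrival process). -/
structure Setup (μ : Measure Ω) (X T : ℕ → Ω → ℝ) : Prop where
  prob : IsProbabilityMeasure μ
  measX : ∀ i, Measurable (X i)
  measT : ∀ i, Measurable (T i)
  indep : iIndepFun (Sum.elim X T) μ
  identX : ∀ i, μ.map (X i) = μ.map (X 0)
  expT : ∀ i, μ.map (T i) = expMeasure 1

end ProphetPoisson

set_option linter.unusedSectionVars false
set_option linter.unusedVariables false

namespace PPAux
open ProphetPoisson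
open scoped ENNReal NNReal
def gk (k : ℕ) (x : ℝ) : ℝ≥0∞ :=
  ENNReal.ofReal (if 0 ≤ x then x ^ k * Real.exp (-x) / (k.factorial : ℝ) else 0)
lemma gk_of_neg {k : ℕ} {x : ℝ} (hx : x < 0) : gk k x = 0 := by
  rw [gk, if_neg (not_le.mpr hx), ENNReal.ofReal_zero]

lemma measurable_gk (k : ℕ) : Measurable (gk k) := by
  apply ENNReal.measurable_ofReal.comp
  exact Measurable.ite measurableSet_Ici (by fun_prop) measurable_const

lemma gk_zero : gk 0 = exponentialPDF 1 := by
  funext x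
  rw [exponentialPDF_eq, gk]
  norm_num

lemma conv_withDensity (f g : ℝ → ℝ≥0∞) (hf : Measurable f) (hg : Measurable g) :
    Measure.map (fun p : ℝ × ℝ => p.1 + p.2)
      ((volume.withDensity f).prod (volume.withDensity g)) =
    volume.withDensity (fun y => ∫⁻ x, f x * g (y - x)) := by
  have hgsub : Measurable fun p : ℝ × ℝ => g (p.2 - p.1) :=
    hg.comp (measurable_snd.sub measurable_fst)
  ext E hE
  rw [Measure.map_apply measurable_add hE, withDensity_apply _ hE]
  have hpre : MeasurableSet ((fun p : ℝ × ℝ => p.1 + p.2) ⁻¹' E) := measurable_add hE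
  rw [Measure.prod_apply hpre]
  have h1 : ∀ x : ℝ, (volume.withDensity g) (Prod.mk x ⁻¹' ((fun p : ℝ × ℝ => p.1 + p.2) ⁻¹' E))
      = ∫⁻ y, E.indicator (fun _ => (1 : ℝ≥0∞)) y * g (y - x) := by
    intro x
    have hset : (Prod.mk x ⁻¹' ((fun p : ℝ × ℝ => p.1 + p.2) ⁻¹' E)) = {t : ℝ | x + t ∈ E} := rfl
    have hms : MeasurableSet {t : ℝ | x + t ∈ E} := (measurable_const_add x) hE
    rw [hset, withDensity_apply _ hms, ← lintegral_indicator hms]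
    have : ∀ t : ℝ, ({t : ℝ | x + t ∈ E}).indicator g t
        = (fun y => E.indicator (fun _ => (1 : ℝ≥0∞)) y * g (y - x)) (x + t) := by
      intro t
      by_cases h : x + t ∈ E
      · simp [Set.indicator_of_mem, h, Set.indicator_of_mem (show t ∈ {t : ℝ | x + t ∈ E} from h)]
      · simp [Set.indicator_of_notMem, h, Set.indicator_of_notMem (show t ∉ {t : ℝ | x + t ∈ E} from h)]
    rw [lintegral_congr this]
    exact lintegral_add_left_eq_self (fun y => E.indicator (fun _ => (1 : ℝ≥0∞)) y * g (y - x)) x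
  rw [lintegral_congr h1]
  have hmeas2 : Measurable fun p : ℝ × ℝ =>
      E.indicator (fun _ => (1 : ℝ≥0∞)) p.2 * g (p.2 - p.1) := by
    apply Measurable.mul _ hgsub
    exact ((measurable_const.indicator hE).comp measurable_snd)
  rw [lintegral_withDensity_eq_lintegral_mul _ hf]
  swap
  · exact Measurable.lintegral_prod_right' (f := fun p : ℝ × ℝ =>
      E.indicator (fun _ => (1 : ℝ≥0∞)) p.2 * g (p.2 - p.1)) hmeas2
  have : ∀ x : ℝ, (f * fun x => ∫⁻ y, E.indicator (fun _ => (1:ℝ≥0∞)) y * g (y - x)) x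
      = ∫⁻ y, E.indicator (fun _ => (1:ℝ≥0∞)) y * (f x * g (y - x)) := by
    intro x
    simp only [Pi.mul_apply]
    rw [← lintegral_const_mul _ (by
      exact (measurable_const.indicator hE).mul (hg.comp (measurable_id.sub measurable_const)))]
    congr 1; funext y; ring
  rw [lintegral_congr this]
  rw [lintegral_lintegral_swap]
  · rw [← lintegral_indicator hE]
    congr 1
    funext y
    rw [lintegral_const_mul _ (show Measurable fun x : ℝ => f x * g (y - x) by fun_prop)]
    by_cases h : y ∈ E
    · simp [Set.indicator_of_mem h]
    · simp [Set.indicator_of_notMem h]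
  · apply Measurable.aemeasurable
    apply Measurable.mul
    · exact (measurable_const.indicator hE).comp measurable_snd
    · exact (hf.comp measurable_fst).mul hgsub

lemma gk_conv (k : ℕ) (y : ℝ) :
    ∫⁻ x, gk k x * exponentialPDF 1 (y - x) = gk (k + 1) y := by
  have hpt : ∀ x : ℝ, gk k x * exponentialPDF 1 (y - x)
      = (Icc 0 y).indicator
          (fun x => ENNReal.ofReal (Real.exp (-y) / (k.factorial : ℝ) * x ^ k)) x := by
    intro x
    rw [gk, exponentialPDF_eq]
    rcases le_or_gt 0 x with h1 | h1
    · rcases le_or_gt x y with h2 | h2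
      · rw [if_pos h1, if_pos (by linarith : (0:ℝ) ≤ y - x),
          Set.indicator_of_mem (Set.mem_Icc.mpr ⟨h1, h2⟩),
          ← ENNReal.ofReal_mul (by positivity)]
        congr 1
        have h3 : Real.exp (-x) * Real.exp (-(1 * (y - x))) = Real.exp (-y) := by
          rw [← Real.exp_add]; congr 1; ring
        calc x ^ k * Real.exp (-x) / (k.factorial : ℝ) * (1 * Real.exp (-(1 * (y - x))))
            = Real.exp (-x) * Real.exp (-(1 * (y - x))) * x ^ k / (k.factorial : ℝ) := by ring
          _ = Real.exp (-y) / (k.factorial : ℝ) * x ^ k := by rw [h3]; ring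
      · rw [if_neg (by linarith : ¬ (0:ℝ) ≤ y - x), ENNReal.ofReal_zero, mul_zero,
          Set.indicator_of_notMem (fun hx => absurd (Set.mem_Icc.mp hx).2 (not_le.mpr h2))]
    · rw [if_neg (not_le.mpr h1), ENNReal.ofReal_zero, zero_mul,
        Set.indicator_of_notMem (fun hx => absurd (Set.mem_Icc.mp hx).1 (not_le.mpr h1))]
  rw [lintegral_congr hpt, lintegral_indicator measurableSet_Icc]
  rcases lt_or_ge y 0 with hy | hy
  · rw [gk_of_neg hy, Set.Icc_eq_empty (by linarith), Measure.restrict_empty, lintegral_zero_measure]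
  · have hconst : ∀ x : ℝ, ENNReal.ofReal (Real.exp (-y) / (k.factorial : ℝ) * x ^ k)
        = ENNReal.ofReal (Real.exp (-y) / (k.factorial : ℝ)) * ENNReal.ofReal (x ^ k) :=
      fun x => ENNReal.ofReal_mul (by positivity)
    simp_rw [hconst]
    rw [lintegral_const_mul _ (by fun_prop : Measurable fun x : ℝ => ENNReal.ofReal (x ^ k))]
    have hint : IntegrableOn (fun x : ℝ => x ^ k) (Icc 0 y) :=
      (continuous_pow k).continuousOn.integrableOn_compact isCompact_Icc
    have hnn : 0 ≤ᵐ[volume.restrict (Icc 0 y)] fun x : ℝ => x ^ k :=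
      ae_restrict_of_forall_mem measurableSet_Icc fun x hx => pow_nonneg hx.1 k
    rw [← ofReal_integral_eq_lintegral_ofReal hint hnn]
    have hval : ∫ x in Icc 0 y, x ^ k = y ^ (k + 1) / (k + 1) := by
      rw [integral_Icc_eq_integral_Ioc, ← intervalIntegral.integral_of_le hy,
        integral_pow]
      simp
    rw [hval, ← ENNReal.ofReal_mul (by positivity), gk, if_pos hy]
    congr 1
    rw [Nat.factorial_succ]
    push_cast
    have hk : (k.factorial : ℝ) ≠ 0 := Nat.cast_ne_zero.mpr k.factorial_ne_zero
    field_simp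
variable {Ω : Type*} [MeasurableSpace Ω]

variable {μ : Measure Ω} {X T : ℕ → Ω → ℝ}

lemma measurable_arrival (hT : ∀ i, Measurable (T i)) (k : ℕ) :
    Measurable (arrival T k) :=
  Finset.measurable_sum _ fun i _ => hT i

lemma measElim (h : Setup μ X T) : ∀ i : ℕ ⊕ ℕ, Measurable (Sum.elim X T i)
  | Sum.inl j => h.measX j
  | Sum.inr j => h.measT j

lemma arrival_eq_sum (X T : ℕ → Ω → ℝ) (k : ℕ) :
    arrival T k
      = ∑ j ∈ (Finset.range (k + 1)).map ⟨Sum.inr, Sum.inr_injective⟩, Sum.elim X T j := by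
  rw [Finset.sum_map]
  funext ω
  rw [Finset.sum_apply]
  rfl

lemma indepFun_arrival_T (h : Setup μ X T) (k : ℕ) :
    IndepFun (arrival T k) (T (k + 1)) μ := by
  have hne : (Sum.inr (k + 1) : ℕ ⊕ ℕ)
      ∉ (Finset.range (k + 1)).map ⟨Sum.inr, Sum.inr_injective⟩ := by
    simp
  have := h.indep.indepFun_finsetSum_of_notMem (measElim h) hne
  rwa [← arrival_eq_sum X T k] at this

lemma indepFun_X_arrival (h : Setup μ X T) (k : ℕ) :
    IndepFun (X k) (arrival T k) μ := by
  have hne : (Sum.inl k : ℕ ⊕ ℕ)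
      ∉ (Finset.range (k + 1)).map ⟨Sum.inr, Sum.inr_injective⟩ := by
    simp
  have := h.indep.indepFun_finsetSum_of_notMem (measElim h) hne
  rw [← arrival_eq_sum X T k] at this
  exact this.symm

lemma measurable_exponentialPDF : Measurable (exponentialPDF 1) :=
  ENNReal.measurable_ofReal.comp (measurable_exponentialPDFReal 1)

lemma map_arrival (h : Setup μ X T) (k : ℕ) :
    μ.map (arrival T k) = volume.withDensity (gk k) := by
  induction k with
  | zero =>
    have h0 : arrival T 0 = T 0 := by funext ω; simp [arrival]
    rw [h0, h.expT 0, gk_zero]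
    rfl
  | succ k ih =>
    haveI := h.prob
    have hA : Measurable (arrival T k) := measurable_arrival h.measT k
    have hB := h.measT (k + 1)
    have hsum : arrival T (k + 1) = fun ω => arrival T k ω + T (k + 1) ω := by
      funext ω; exact Finset.sum_range_succ _ _
    have hmap : μ.map (fun ω => (arrival T k ω, T (k + 1) ω))
        = (μ.map (arrival T k)).prod (μ.map (T (k + 1))) :=
      (indepFun_iff_map_prod_eq_prod_map_map hA.aemeasurable hB.aemeasurable).mp
        (indepFun_arrival_T h k)
    have hcomp : μ.map (arrival T (k + 1))
        = Measure.map (fun p : ℝ × ℝ => p.1 + p.2)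
            (μ.map (fun ω => (arrival T k ω, T (k + 1) ω))) := by
      rw [Measure.map_map measurable_add (hA.prodMk hB), hsum]
      rfl
    rw [hcomp, hmap, ih, h.expT (k + 1),
      show expMeasure 1 = volume.withDensity (exponentialPDF 1) from rfl,
      conv_withDensity _ _ (measurable_gk k) measurable_exponentialPDF]
    congr 1
    funext y
    exact gk_conv k y

lemma prob_arrival_le (h : Setup μ X T) (k : ℕ) (s : ℝ) :
    μ {ω | arrival T k ω ≤ s} = ∫⁻ x in Iic s, gk k x := by
  have hA : Measurable (arrival T k) := measurable_arrival h.measT k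
  have hset : {ω | arrival T k ω ≤ s} = arrival T k ⁻¹' Iic s := rfl
  rw [hset, ← Measure.map_apply hA measurableSet_Iic, map_arrival h k,
    withDensity_apply _ measurableSet_Iic]

lemma tsum_gk (x : ℝ) : ∑' k, gk k x = (Ici (0:ℝ)).indicator (fun _ => 1) x := by
  rcases le_or_gt 0 x with hx | hx
  · have hsummand : ∀ k : ℕ, gk k x
        = ENNReal.ofReal (Real.exp (-x) * (x ^ k / (k.factorial : ℝ))) := by
      intro k; rw [gk, if_pos hx]; congr 1; ring
    have hsummable : Summable fun k : ℕ => Real.exp (-x) * (x ^ k / (k.factorial : ℝ)) :=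
      (Real.summable_pow_div_factorial x).mul_left _
    have hexp : ∑' k : ℕ, x ^ k / (k.factorial : ℝ) = Real.exp x := by
      rw [Real.exp_eq_exp_ℝ]
      exact (NormedSpace.expSeries_div_hasSum_exp x).tsum_eq
    simp_rw [hsummand]
    rw [← ENNReal.ofReal_tsum_of_nonneg (fun k => by positivity) hsummable,
      tsum_mul_left, hexp, ← Real.exp_add, neg_add_cancel, Real.exp_zero,
      ENNReal.ofReal_one, Set.indicator_of_mem (Set.mem_Ici.mpr hx)]
  · rw [tsum_congr fun k => gk_of_neg hx, tsum_zero,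
      Set.indicator_of_notMem (by simpa using hx.not_ge)]

lemma tsum_prob_arrival (h : Setup μ X T) {s : ℝ} (hs : 0 ≤ s) :
    ∑' k, μ {ω | arrival T k ω ≤ s} = ENNReal.ofReal s := by
  have : ∀ k : ℕ, μ {ω | arrival T k ω ≤ s} = ∫⁻ x in Iic s, gk k x :=
    fun k => prob_arrival_le h k s
  simp_rw [this]
  rw [← lintegral_tsum fun k => (measurable_gk k).aemeasurable,
    lintegral_congr fun x => tsum_gk x, lintegral_indicator measurableSet_Ici,
    setLIntegral_one, Measure.restrict_apply measurableSet_Ici, Set.Ici_inter_Iic,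
    Real.volume_Icc, sub_zero]


/-- the `k`-th term `X_k 1(S_k ≤ s)`. -/
def fK (X T : ℕ → Ω → ℝ) (s : ℝ) (k : ℕ) (ω : Ω) : ℝ :=
  if arrival T k ω ≤ s then X k ω else 0

/-- `(X_k 1(S_k ≤ s) - c)⁺` as an `ℝ≥0∞`-valued function. -/
def hK (X T : ℕ → Ω → ℝ) (s c : ℝ) (k : ℕ) (ω : Ω) : ℝ≥0∞ :=
  ENNReal.ofReal (max (fK X T s k ω - c) 0)

lemma measurable_fK (hX : ∀ i, Measurable (X i)) (hT : ∀ i, Measurable (T i))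
    (s : ℝ) (k : ℕ) : Measurable (fK X T s k) :=
  Measurable.ite ((measurable_arrival hT k) measurableSet_Iic) (hX k) measurable_const

lemma measurable_hK (hX : ∀ i, Measurable (X i)) (hT : ∀ i, Measurable (T i))
    (s c : ℝ) (k : ℕ) : Measurable (hK X T s c k) :=
  ENNReal.measurable_ofReal.comp (((measurable_fK hX hT s k).sub measurable_const).max
    measurable_const)

lemma pointwise_bound (hXnn : ∀ i ω, 0 ≤ X i ω) {s c : ℝ} (hc : 0 ≤ c) (ω : Ω) :
    ENNReal.ofReal (max (maxByT X T s ω - c) 0)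
        + min (hK X T s c 0 ω) (hK X T s c 1 ω)
      ≤ ∑' k, hK X T s c k ω := by
  have hfnn : ∀ k, 0 ≤ fK X T s k ω := by
    intro k; unfold fK; split
    · exact hXnn k ω
    · exact le_rfl
  have hkey : ∀ k, hK X T s c k ω + min (hK X T s c 0 ω) (hK X T s c 1 ω)
      ≤ ∑' j, hK X T s c j ω := by
    intro k
    rcases eq_or_ne k 0 with rfl | hk
    · calc hK X T s c 0 ω + min (hK X T s c 0 ω) (hK X T s c 1 ω)
          ≤ hK X T s c 0 ω + hK X T s c 1 ω := add_le_add le_rfl (min_le_right _ _)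
        _ = ∑ j ∈ ({0, 1} : Finset ℕ), hK X T s c j ω := by
            rw [Finset.sum_pair (by norm_num : (0:ℕ) ≠ 1)]
        _ ≤ ∑' j, hK X T s c j ω := ENNReal.sum_le_tsum _
    · calc hK X T s c k ω + min (hK X T s c 0 ω) (hK X T s c 1 ω)
          ≤ hK X T s c k ω + hK X T s c 0 ω := add_le_add le_rfl (min_le_left _ _)
        _ = ∑ j ∈ ({k, 0} : Finset ℕ), hK X T s c j ω := by rw [Finset.sum_pair hk]
        _ ≤ ∑' j, hK X T s c j ω := ENNReal.sum_le_tsum _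
  by_cases hbdd : BddAbove (Set.range fun k => fK X T s k ω)
  · have hmb : maxByT X T s ω = ⨆ k, fK X T s k ω := rfl
    have hmono : Monotone fun x : ℝ => ENNReal.ofReal (max (x - c) 0) := fun a b hab =>
      ENNReal.ofReal_le_ofReal (max_le_max (by linarith) le_rfl)
    have hcont : ContinuousAt (fun x : ℝ => ENNReal.ofReal (max (x - c) 0))
        (⨆ k, fK X T s k ω) :=
      (ENNReal.continuous_ofReal.comp
        ((continuous_sub_right c).max continuous_const)).continuousAt
    rw [hmb, hmono.map_ciSup_of_continuousAt hcont hbdd, ENNReal.iSup_add]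
    exact iSup_le hkey
  · have hmb : maxByT X T s ω = 0 := Real.iSup_of_not_bddAbove hbdd
    rw [hmb, zero_sub, max_eq_right (neg_nonpos.mpr hc), ENNReal.ofReal_zero, zero_add]
    exact (min_le_left _ _).trans (ENNReal.le_tsum 0)

lemma lintegral_hK (h : Setup μ X T) {s c : ℝ} (hc : 0 ≤ c) (k : ℕ) :
    ∫⁻ ω, hK X T s c k ω ∂μ
      = (∫⁻ ω, ENNReal.ofReal (max (X 0 ω - c) 0) ∂μ) * μ {ω | arrival T k ω ≤ s} := by
  set φ : ℝ → ℝ≥0∞ := fun x => ENNReal.ofReal (max (x - c) 0) with hφdef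
  set ψ : ℝ → ℝ≥0∞ := fun t => if t ≤ s then 1 else 0 with hψdef
  have hφ : Measurable φ :=
    ENNReal.measurable_ofReal.comp ((measurable_id.sub measurable_const).max measurable_const)
  have hψ : Measurable ψ := Measurable.ite measurableSet_Iic measurable_const measurable_const
  have hA : Measurable (arrival T k) := measurable_arrival h.measT k
  have hpt : hK X T s c k = fun ω => (φ (X k ω)) * (ψ (arrival T k ω)) := by
    funext ω
    unfold hK fK
    by_cases hle : arrival T k ω ≤ s
    · simp [hle, hφdef, hψdef]
    · simp [hle, hφdef, hψdef, zero_sub, max_eq_right (neg_nonpos.mpr hc)]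
  have hindep : IndepFun (fun ω => φ (X k ω)) (fun ω => ψ (arrival T k ω)) μ :=
    (indepFun_X_arrival h k).comp hφ hψ
  rw [hpt]
  have := lintegral_mul_eq_lintegral_mul_lintegral_of_indepFun
    (μ := μ) (f := fun ω => φ (X k ω)) (g := fun ω => ψ (arrival T k ω))
    (hφ.comp (h.measX k)) (hψ.comp hA) hindep
  rw [show (fun ω => φ (X k ω) * ψ (arrival T k ω))
      = (fun ω => φ (X k ω)) * (fun ω => ψ (arrival T k ω)) from rfl, this]
  congr 1
  · rw [← lintegral_map hφ (h.measX k), h.identX k, lintegral_map hφ (h.measX 0)]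
  · have hset : (fun ω => ψ (arrival T k ω))
        = {ω | arrival T k ω ≤ s}.indicator fun _ => (1:ℝ≥0∞) := by
      funext ω
      rw [Set.indicator_apply]
      rfl
    rw [hset, lintegral_indicator (show MeasurableSet {ω | arrival T k ω ≤ s} from hA measurableSet_Iic), setLIntegral_one]

lemma event_pos (h : Setup μ X T) {s c : ℝ} (hs : 0 < s)
    (hc0 : 0 < μ (X 0 ⁻¹' Ioi c)) :
    0 < μ (X 0 ⁻¹' Ioi c ∩ X 1 ⁻¹' Ioi c ∩ T 0 ⁻¹' Iic (s/2) ∩ T 1 ⁻¹' Iic (s/2)) := by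
  haveI := h.prob
  classical
  set S : Finset (ℕ ⊕ ℕ) := {Sum.inl 0, Sum.inl 1, Sum.inr 0, Sum.inr 1} with hS
  set sets : ℕ ⊕ ℕ → Set ℝ := Sum.elim (fun _ => Ioi c) (fun _ => Iic (s/2)) with hsets
  have hmeas : ∀ i, i ∈ S → MeasurableSet (sets i) := by
    intro i _
    rcases i with i | i
    · exact measurableSet_Ioi
    · exact measurableSet_Iic
  have hprod := h.indep.measure_inter_preimage_eq_mul S hmeas
  have hinter : (⋂ i ∈ S, Sum.elim X T i ⁻¹' sets i)
      = X 0 ⁻¹' Ioi c ∩ X 1 ⁻¹' Ioi c ∩ T 0 ⁻¹' Iic (s/2) ∩ T 1 ⁻¹' Iic (s/2) := by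
    ext ω
    simp [hS, hsets, Set.mem_inter_iff, and_assoc]
  have hS1 : μ (X 1 ⁻¹' Ioi c) = μ (X 0 ⁻¹' Ioi c) := by
    rw [← Measure.map_apply (h.measX 1) measurableSet_Ioi, h.identX 1,
      Measure.map_apply (h.measX 0) measurableSet_Ioi]
  have hT2 : ∀ i, μ (T i ⁻¹' Iic (s/2)) = ENNReal.ofReal (1 - Real.exp (-(1 * (s/2)))) := by
    intro i
    rw [← Measure.map_apply (h.measT i) measurableSet_Iic, h.expT i,
      show expMeasure 1 = volume.withDensity (exponentialPDF 1) from rfl,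
      withDensity_apply _ measurableSet_Iic,
      lintegral_exponentialPDF_eq_antiDeriv one_pos, if_pos (by linarith : (0:ℝ) ≤ s/2)]
  have hTpos : (0:ℝ≥0∞) < ENNReal.ofReal (1 - Real.exp (-(1 * (s/2)))) := by
    apply ENNReal.ofReal_pos.mpr
    have : Real.exp (-(1 * (s/2))) < 1 := Real.exp_lt_one_iff.mpr (by linarith)
    linarith
  rw [← hinter, hprod]
  have hprodval : ∏ i ∈ S, μ (Sum.elim X T i ⁻¹' sets i)
      = μ (X 0 ⁻¹' Ioi c) * (μ (X 1 ⁻¹' Ioi c) * (μ (T 0 ⁻¹' Iic (s/2))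
          * μ (T 1 ⁻¹' Iic (s/2)))) := by
    rw [hS]
    rw [Finset.prod_insert (by simp), Finset.prod_insert (by simp),
      Finset.prod_insert (by simp), Finset.prod_singleton]
    rfl
  rw [hprodval, hS1, hT2 0, hT2 1]
  exact ENNReal.mul_pos hc0.ne'
    (ENNReal.mul_pos hc0.ne' (ENNReal.mul_pos hTpos.ne' hTpos.ne').ne').ne'
lemma maxByT_eq_toReal (hXnn : ∀ i ω, 0 ≤ X i ω) (s : ℝ) (ω : Ω) :
    maxByT X T s ω = (⨆ k, ENNReal.ofReal (fK X T s k ω)).toReal := by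
  have hfnn : ∀ k, 0 ≤ fK X T s k ω := by
    intro k; unfold fK; split
    · exact hXnn k ω
    · exact le_rfl
  by_cases hbdd : BddAbove (Set.range fun k => fK X T s k ω)
  · have hsup : (⨆ k, ENNReal.ofReal (fK X T s k ω))
        = ENNReal.ofReal (⨆ k, fK X T s k ω) :=
      (Monotone.map_ciSup_of_continuousAt ENNReal.continuous_ofReal.continuousAt
        (fun a b hab => ENNReal.ofReal_le_ofReal hab) hbdd).symm
    have hmb : maxByT X T s ω = ⨆ k, fK X T s k ω := rfl
    rw [hmb, hsup, ENNReal.toReal_ofReal ((hfnn 0).trans (le_ciSup hbdd 0))]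
  · have h1 : maxByT X T s ω = 0 := Real.iSup_of_not_bddAbove hbdd
    have h2 : (⨆ k, ENNReal.ofReal (fK X T s k ω)) = ⊤ := by
      by_contra hne
      apply hbdd
      refine ⟨(⨆ k, ENNReal.ofReal (fK X T s k ω)).toReal, ?_⟩
      rintro x ⟨k, rfl⟩
      calc fK X T s k ω = (ENNReal.ofReal (fK X T s k ω)).toReal :=
            (ENNReal.toReal_ofReal (hfnn k)).symm
        _ ≤ _ := ENNReal.toReal_mono hne (le_iSup (fun k => ENNReal.ofReal (fK X T s k ω)) k)
    rw [h1, h2, ENNReal.toReal_top]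

lemma measurable_maxByT (hX : ∀ i, Measurable (X i)) (hT : ∀ i, Measurable (T i))
    (hXnn : ∀ i ω, 0 ≤ X i ω) (s : ℝ) : Measurable (maxByT X T s) := by
  have : maxByT X T s = fun ω => (⨆ k, ENNReal.ofReal (fK X T s k ω)).toReal :=
    funext (maxByT_eq_toReal hXnn s)
  rw [this]
  exact ENNReal.measurable_toReal.comp
    (Measurable.iSup fun k => ENNReal.measurable_ofReal.comp (measurable_fK hX hT s k))

theorem main (μ : Measure Ω) (X T : ℕ → Ω → ℝ)
    (hsetup : Setup μ X T)
    (hXnn : ∀ i ω, 0 ≤ X i ω) (hXint : Integrable (X 0) μ)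
    (hXne : μ {ω | X 0 ω = 0} < 1)
    (s : ℝ) (hs : 0 < s) (c : ℝ) (hc : 0 ≤ c) :
    (∫ ω, max (maxByT X T s ω - c) 0 ∂μ) ≤ s * ∫ ω, max (X 0 ω - c) 0 ∂μ ∧
      (0 < μ {ω | c < X 0 ω} →
        (∫ ω, max (maxByT X T s ω - c) 0 ∂μ) < s * ∫ ω, max (X 0 ω - c) 0 ∂μ) := by
  haveI := hsetup.prob
  set J := ∫⁻ ω, ENNReal.ofReal (max (X 0 ω - c) 0) ∂μ with hJdef
  set I := ∫⁻ ω, ENNReal.ofReal (max (maxByT X T s ω - c) 0) ∂μ with hIdef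
  set ε := ∫⁻ ω, min (hK X T s c 0 ω) (hK X T s c 1 ω) ∂μ with hεdef
  have hJtop : J ≠ ⊤ := by
    have hle : J ≤ ∫⁻ ω, ENNReal.ofReal (X 0 ω) ∂μ :=
      lintegral_mono fun ω => ENNReal.ofReal_le_ofReal
        (max_le (by linarith [hXnn 0 ω]) (hXnn 0 ω))
    exact (hle.trans_lt hXint.lintegral_lt_top).ne
  have hmeasM : Measurable fun ω => max (maxByT X T s ω - c) 0 :=
    ((measurable_maxByT hsetup.measX hsetup.measT hXnn s).sub measurable_const).max
      measurable_const
  have hIε : I + ε ≤ J * ENNReal.ofReal s := by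
    calc I + ε = ∫⁻ ω, (ENNReal.ofReal (max (maxByT X T s ω - c) 0)
          + min (hK X T s c 0 ω) (hK X T s c 1 ω)) ∂μ :=
        (lintegral_add_left (ENNReal.measurable_ofReal.comp hmeasM) _).symm
      _ ≤ ∫⁻ ω, ∑' k, hK X T s c k ω ∂μ := lintegral_mono (pointwise_bound hXnn hc)
      _ = ∑' k, ∫⁻ ω, hK X T s c k ω ∂μ :=
        lintegral_tsum fun k => (measurable_hK hsetup.measX hsetup.measT s c k).aemeasurable
      _ = ∑' k, J * μ {ω | arrival T k ω ≤ s} := by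
        refine tsum_congr fun k => ?_
        rw [lintegral_hK hsetup hc k]
      _ = J * ∑' k, μ {ω | arrival T k ω ≤ s} := ENNReal.tsum_mul_left
      _ = J * ENNReal.ofReal s := by rw [tsum_prob_arrival hsetup hs.le]
  set K := J * ENNReal.ofReal s with hKdef
  have hKtop : K ≠ ⊤ := ENNReal.mul_ne_top hJtop ENNReal.ofReal_ne_top
  have hIK : I ≤ K := le_trans le_self_add hIε
  have hItop : I ≠ ⊤ := (hIK.trans_lt hKtop.lt_top).ne
  have hIM : ∫ ω, max (maxByT X T s ω - c) 0 ∂μ = I.toReal :=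
    integral_eq_lintegral_of_nonneg_ae (μ := μ)
      (f := fun ω => max (maxByT X T s ω - c) 0)
      (ae_of_all μ fun ω => le_max_right _ _) hmeasM.aestronglyMeasurable
  have hJM : ∫ ω, max (X 0 ω - c) 0 ∂μ = J.toReal :=
    integral_eq_lintegral_of_nonneg_ae (μ := μ)
      (f := fun ω => max (X 0 ω - c) 0)
      (ae_of_all μ fun ω => le_max_right _ _)
      (((hsetup.measX 0).sub measurable_const).max measurable_const).aestronglyMeasurable
  have hRHS : s * ∫ ω, max (X 0 ω - c) 0 ∂μ = K.toReal := by
    rw [hJM, hKdef, ENNReal.toReal_mul, ENNReal.toReal_ofReal hs.le]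
    ring
  constructor
  · rw [hIM, hRHS]
    exact ENNReal.toReal_mono hKtop hIK
  · intro hpos
    have hpos' : 0 < μ (X 0 ⁻¹' Ioi c) := hpos
    have hεpos : 0 < ε := by
      have hmeasmin : Measurable fun ω => min (hK X T s c 0 ω) (hK X T s c 1 ω) :=
        (measurable_hK hsetup.measX hsetup.measT s c 0).min
          (measurable_hK hsetup.measX hsetup.measT s c 1)
      rw [hεdef, lintegral_pos_iff_support hmeasmin]
      refine lt_of_lt_of_le (event_pos hsetup hs hpos') (measure_mono ?_)
      rintro ω ⟨⟨⟨h0, h1⟩, hT0⟩, hT1⟩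
      have hT0' : T 0 ω ≤ s / 2 := hT0
      have hT1' : T 1 ω ≤ s / 2 := hT1
      have harr0 : arrival T 0 ω ≤ s := by
        have harr : arrival T 0 ω = T 0 ω := by simp [arrival]
        rw [harr]; linarith
      have harr1 : arrival T 1 ω ≤ s := by
        have harr : arrival T 1 ω = T 0 ω + T 1 ω := by
          simp [arrival, Finset.sum_range_succ]
        rw [harr]; linarith
      have h0' : (0:ℝ≥0∞) < hK X T s c 0 ω := by
        unfold hK fK
        rw [if_pos harr0]
        exact ENNReal.ofReal_pos.mpr (lt_max_iff.mpr (Or.inl (by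
          have : c < X 0 ω := h0
          linarith)))
      have h1' : (0:ℝ≥0∞) < hK X T s c 1 ω := by
        unfold hK fK
        rw [if_pos harr1]
        exact ENNReal.ofReal_pos.mpr (lt_max_iff.mpr (Or.inl (by
          have : c < X 1 ω := h1
          linarith)))
      simp only [Function.mem_support]
      exact (lt_min h0' h1').ne'
    have hlt : I < K := lt_of_lt_of_le (ENNReal.lt_add_right hItop hεpos.ne') hIε
    rw [hIM, hRHS]
    exact (ENNReal.toReal_lt_toReal hItop hKtop).mpr hlt


end PPAux

open ProphetPoisson in
/-- Lemma `simple-bound`: for `s > 0` and `c ≥ 0`,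
`E[(X_s* − c)⁺] ≤ s·E[(X − c)⁺]`, with strict inequality if `P(X > c) > 0`. -/
theorem expected_max_pos_part_le
    {Ω : Type*} [MeasurableSpace Ω] (μ : Measure Ω) (X T : ℕ → Ω → ℝ)
    (hsetup : Setup μ X T)
    (hXnn : ∀ i ω, 0 ≤ X i ω) (hXint : Integrable (X 0) μ)
    (hXne : μ {ω | X 0 ω = 0} < 1)
    (s : ℝ) (hs : 0 < s) (c : ℝ) (hc : 0 ≤ c) :
    (∫ ω, max (maxByT X T s ω - c) 0 ∂μ) ≤ s * ∫ ω, max (X 0 ω - c) 0 ∂μ ∧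
      (0 < μ {ω | c < X 0 ω} →
        (∫ ω, max (maxByT X T s ω - c) 0 ∂μ) < s * ∫ ω, max (X 0 ω - c) 0 ∂μ) :=
  PPAux.main μ X T hsetup hXnn hXint hXne s hs c hc
end
end

section
/- For every γ > 0, the function f(x) := (1 − e^{−x})(1 + γ/x), defined for x > 0, has no local minimum on (0, ∞); that is, there is no point x₀ > 0 and no neighborhood (x₀ − δ, x₀ + δ) ⊆ (0,∞) on which f attains its minimum at x₀. -/
/-- Lemma `calculus`: for `γ > 0`, the function
`f(x) = (1 − e^{−x})(1 + γ/x)` has no local minimum on `(0, ∞)`. -/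
theorem no_local_min_one_sub_exp_mul_one_add_div (γ : ℝ) (hγ : 0 < γ) :
    ¬ ∃ x₀ δ : ℝ, 0 < x₀ ∧ 0 < δ ∧
      Set.Ioo (x₀ - δ) (x₀ + δ) ⊆ Set.Ioi (0 : ℝ) ∧
      ∀ x ∈ Set.Ioo (x₀ - δ) (x₀ + δ),
        (1 - Real.exp (-x₀)) * (1 + γ / x₀) ≤ (1 - Real.exp (-x)) * (1 + γ / x) := by
  rintro ⟨x₀, δ, hx₀, hδ, hsub, hmin⟩
  set f : ℝ → ℝ := fun x => (1 - Real.exp (-x)) * (1 + γ / x) with hfdef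
  set F : ℝ → ℝ := fun x =>
    Real.exp (-x) * (1 + γ / x) + (1 - Real.exp (-x)) * (γ * (-(x ^ 2)⁻¹)) with hFdef
  set h : ℝ → ℝ := fun x => x ^ 2 + γ * x + γ - γ * Real.exp x with hhdef
  set h' : ℝ → ℝ := fun x => 2 * x + γ - γ * Real.exp x with hh'def
  -- derivative of f
  have hfd : ∀ x : ℝ, x ≠ 0 → HasDerivAt f (F x) x := by
    intro x hx
    have h1 : HasDerivAt (fun x : ℝ => 1 - Real.exp (-x)) (Real.exp (-x)) x := by
      have he : HasDerivAt (fun x : ℝ => Real.exp (-x)) (Real.exp (-x) * (-1)) x :=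
        (Real.hasDerivAt_exp (-x)).comp x ((hasDerivAt_id x).neg)
      simpa using (hasDerivAt_const x (1 : ℝ)).fun_sub he
    have h2 : HasDerivAt (fun x : ℝ => 1 + γ / x) (γ * (-(x ^ 2)⁻¹)) x := by
      have hi : HasDerivAt (fun x : ℝ => γ * x⁻¹) (γ * (-(x ^ 2)⁻¹)) x :=
        (hasDerivAt_inv hx).const_mul γ
      have : HasDerivAt (fun x : ℝ => 1 + γ * x⁻¹) (γ * (-(x ^ 2)⁻¹)) x := by
        simpa using (hasDerivAt_const x (1 : ℝ)).fun_add hi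
      simpa [div_eq_mul_inv] using this
    simpa [hFdef] using h1.fun_mul h2
  -- derivative of h
  have hhd : ∀ x : ℝ, HasDerivAt h (h' x) x := by
    intro x
    have hp : HasDerivAt (fun x : ℝ => x ^ 2 + γ * x + γ) (2 * x + γ) x := by
      have h1 : HasDerivAt (fun x : ℝ => x ^ 2) (2 * x) x := by
        simpa using hasDerivAt_pow 2 x
      have h2 : HasDerivAt (fun x : ℝ => γ * x) γ x := by
        simpa using (hasDerivAt_id x).const_mul γ
      simpa using (h1.add h2).add_const γ
    have he : HasDerivAt (fun x : ℝ => γ * Real.exp x) (γ * Real.exp x) x :=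
      (Real.hasDerivAt_exp x).const_mul γ
    simpa [hhdef, hh'def] using hp.fun_sub he
  -- relation h x = F x * (x^2 * exp x)
  have hrel : ∀ x : ℝ, x ≠ 0 → h x = F x * (x ^ 2 * Real.exp x) := by
    intro x hx
    simp only [hhdef, hFdef]
    rw [Real.exp_neg]
    have hex := Real.exp_ne_zero x
    field_simp
    ring
  -- local min gives F x₀ = 0, hence h x₀ = 0
  have hmem : x₀ ∈ Set.Ioo (x₀ - δ) (x₀ + δ) := ⟨by linarith, by linarith⟩
  have hloc : IsLocalMin f x₀ :=
    Filter.eventually_of_mem (Ioo_mem_nhds (by linarith) (by linarith)) hmin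
  have hF0 : F x₀ = 0 := hloc.hasDerivAt_eq_zero (hfd x₀ (ne_of_gt hx₀))
  have hhx₀ : h x₀ = 0 := by rw [hrel x₀ (ne_of_gt hx₀), hF0, zero_mul]
  have hh0 : h 0 = 0 := by simp [hhdef]
  -- pick x₁ ∈ (max(x₀-δ,0), x₀)
  set x₁ : ℝ := max (x₀ - δ / 2) (x₀ / 2) with hx₁def
  have hx₁pos : 0 < x₁ := lt_of_lt_of_le (by linarith) (le_max_right _ _)
  have hx₁lt : x₁ < x₀ := max_lt (by linarith) (by linarith)
  have hx₁mem : x₁ ∈ Set.Ioo (x₀ - δ) (x₀ + δ) :=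
    ⟨lt_of_lt_of_le (by linarith) (le_max_left _ _), by linarith⟩
  -- MVT on f over [x₁, x₀] : get c with F c ≤ 0
  have hfc : ContinuousOn f (Set.Icc x₁ x₀) := by
    intro x hx
    have hxpos : (0 : ℝ) < x := lt_of_lt_of_le hx₁pos hx.1
    exact (hfd x (ne_of_gt hxpos)).continuousAt.continuousWithinAt
  obtain ⟨c, hc, hceq⟩ := exists_hasDerivAt_eq_slope f F hx₁lt hfc
    (fun x hx => hfd x (ne_of_gt (lt_trans hx₁pos hx.1)))
  have hcpos : 0 < c := lt_trans hx₁pos hc.1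
  have hFc : F c ≤ 0 := by
    rw [hceq]
    apply div_nonpos_of_nonpos_of_nonneg
    · have := hmin x₁ hx₁mem
      simp only [hfdef]
      linarith [this]
    · linarith [hc.2, hc.1]
  have hhc : h c ≤ 0 := by
    rw [hrel c (ne_of_gt hcpos)]
    exact mul_nonpos_of_nonpos_of_nonneg hFc
      (le_of_lt (mul_pos (pow_pos hcpos 2) (Real.exp_pos c)))
  -- MVT on h over [0, c] : get c₁ with h' c₁ ≤ 0
  obtain ⟨c₁, hc₁, hc₁eq⟩ := exists_hasDerivAt_eq_slope h h' hcpos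
    (fun x hx => (hhd x).continuousAt.continuousWithinAt) (fun x _ => hhd x)
  have hh'c₁ : h' c₁ ≤ 0 := by
    rw [hc₁eq, hh0]
    apply div_nonpos_of_nonpos_of_nonneg (by linarith) (by linarith)
  -- MVT on h over [c, x₀] : get c₂ with h' c₂ ≥ 0
  obtain ⟨c₂, hc₂, hc₂eq⟩ := exists_hasDerivAt_eq_slope h h' hc.2
    (fun x hx => (hhd x).continuousAt.continuousWithinAt) (fun x _ => hhd x)
  have hh'c₂ : 0 ≤ h' c₂ := by
    rw [hc₂eq, hhx₀]
    apply div_nonneg (by linarith) (by linarith [hc₂.1, hc₂.2])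
  -- strict concavity of h' (via strict convexity of exp) gives a contradiction
  have hc₁pos : 0 < c₁ := hc₁.1
  have hc₁lt : c₁ < c₂ := lt_trans hc₁.2 hc₂.1
  have hc₂pos : 0 < c₂ := lt_trans hc₁pos hc₁lt
  set b : ℝ := c₁ / c₂ with hbdef
  have hb0 : 0 < b := div_pos hc₁pos hc₂pos
  have hb1 : b < 1 := (div_lt_one hc₂pos).2 hc₁lt
  have hbc : b * c₂ = c₁ := div_mul_cancel₀ c₁ (ne_of_gt hc₂pos)
  have hconv := strictConvexOn_exp.2 (Set.mem_univ (0 : ℝ)) (Set.mem_univ c₂)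
    (ne_of_lt hc₂pos) (by linarith : (0 : ℝ) < 1 - b) hb0 (by ring)
  have hexp : Real.exp c₁ < (1 - b) + b * Real.exp c₂ := by
    simpa [smul_eq_mul, hbc, Real.exp_zero] using hconv
  have hkey : b * h' c₂ < h' c₁ := by
    simp only [hh'def]
    nlinarith [mul_pos hγ (sub_pos.2 hexp)]
  nlinarith [mul_nonneg (le_of_lt hb0) hh'c₂]
end

section
/- For every t > 0, α > 0, and p ∈ (0, 1], one has (1 − e^{−tp})(1 + α/p) ≥ min{ tα, (1 − e^{−t})(1 + α) }. -/
open Real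

-- derivative positivity key: s^2 * e^{-s} < (1 - e^{-s})^2 for s > 0
lemma key_sq {s : ℝ} (hs : 0 < s) : s^2 * Real.exp (-s) < (1 - Real.exp (-s))^2 := by
  have h1 : s / 2 < Real.sinh (s / 2) := Real.self_lt_sinh_iff.2 (by linarith)
  rw [Real.sinh_eq] at h1
  have h2 : Real.exp (-(s/2)) * Real.exp (s/2) = 1 := by
    rw [← Real.exp_add]; simp
  have h3 : Real.exp (-(s/2)) * Real.exp (-(s/2)) = Real.exp (-s) := by
    rw [← Real.exp_add]; ring_nf
  have h4 : (0:ℝ) < Real.exp (-(s/2)) := Real.exp_pos _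
  have h5 : (0:ℝ) < Real.exp (s/2) := Real.exp_pos _
  -- 1 - e^{-s} = e^{-s/2} * (e^{s/2} - e^{-s/2}) > e^{-s/2} * s
  have h6 : 1 - Real.exp (-s) = Real.exp (-(s/2)) * (Real.exp (s/2) - Real.exp (-(s/2))) := by
    rw [mul_sub, h2, h3]
  have h7 : s < Real.exp (s/2) - Real.exp (-(s/2)) := by linarith
  have h8 : s * Real.exp (-(s/2)) < (Real.exp (s/2) - Real.exp (-(s/2))) * Real.exp (-(s/2)) := by
    exact mul_lt_mul_of_pos_right h7 h4
  nlinarith [mul_pos hs h4, sq_nonneg (s * Real.exp (-(s/2)))]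

-- psi monotone: 1/(1-e^{-s}) - 1/s
lemma psi_mono : StrictMonoOn (fun s : ℝ => (1 - Real.exp (-s))⁻¹ - s⁻¹) (Set.Ioi 0) := by
  have hne : ∀ s : ℝ, s ∈ Set.Ioi (0:ℝ) → 1 - Real.exp (-s) ≠ 0 := by
    intro s hs
    have : Real.exp (-s) < 1 := Real.exp_lt_one_iff.2 (by simpa using hs.out)
    linarith
  apply strictMonoOn_of_deriv_pos (convex_Ioi 0)
  · apply ContinuousOn.sub
    · exact (Continuous.continuousOn (by continuity)).inv₀ hne
    · exact continuousOn_inv₀.mono (by intro x hx; exact ne_of_gt hx)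
  · intro x hx
    rw [interior_Ioi] at hx
    have hx0 : (0:ℝ) < x := hx
    have hax : 1 - Real.exp (-x) ≠ 0 := hne x hx
    have hd1 : HasDerivAt (fun s : ℝ => 1 - Real.exp (-s)) (Real.exp (-x)) x := by
      have : HasDerivAt (fun s : ℝ => Real.exp (-s)) (-Real.exp (-x)) x := by
        simpa [Function.comp_def] using (Real.hasDerivAt_exp (-x)).comp x ((hasDerivAt_id x).neg)
      simpa using (this.const_sub 1)
    have hd2 : HasDerivAt (fun s : ℝ => (1 - Real.exp (-s))⁻¹)
        (-(Real.exp (-x)) / (1 - Real.exp (-x))^2) x := hd1.inv hax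
    have hd3 : HasDerivAt (fun s : ℝ => (1 - Real.exp (-s))⁻¹ - s⁻¹)
        (-(Real.exp (-x)) / (1 - Real.exp (-x))^2 - (-(x^2)⁻¹)) x :=
      hd2.sub (hasDerivAt_inv (ne_of_gt hx0))
    rw [hd3.deriv]
    have hkey := key_sq hx0
    have hsq : (0:ℝ) < (1 - Real.exp (-x))^2 := by positivity
    rw [sub_neg_eq_add, neg_div]
    have : Real.exp (-x) / (1 - Real.exp (-x))^2 < (x^2)⁻¹ := by
      rw [div_lt_iff₀ hsq, ← sub_pos]
      have hx2 : (0:ℝ) < x^2 := by positivity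
      field_simp
      nlinarith
    linarith

-- g decreasing in cleared form
lemma key_g {u t : ℝ} (hu : 0 < u) (hut : u ≤ t) :
    u * (1 - Real.exp (-t)) ≤ t * (1 - Real.exp (-u)) := by
  have ht : 0 < t := lt_of_lt_of_le hu hut
  have h1 : (0:ℝ) ≤ u/t := by positivity
  have h2 : (0:ℝ) ≤ 1 - u/t := by
    have : u/t ≤ 1 := (div_le_one ht).2 hut
    linarith
  have hc := convexOn_exp.2 (Set.mem_univ (-t)) (Set.mem_univ (0:ℝ)) h1 h2 (by ring)
  simp only [smul_eq_mul, mul_zero, add_zero, Real.exp_zero, mul_one] at hc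
  have h3 : u / t * -t = -u := by field_simp
  rw [h3] at hc
  have h6 := mul_le_mul_of_nonneg_left hc (le_of_lt ht)
  have h5 : t * (u / t * Real.exp (-t) + (1 - u / t)) = u * Real.exp (-t) + t - u := by
    field_simp; ring
  rw [h5] at h6
  nlinarith

-- key product inequality: u*b*(a+t) ≤ t*a*(u+b)
lemma key_prod {u t : ℝ} (hu : 0 < u) (hut : u ≤ t) :
    u * (1 - Real.exp (-t)) * ((1 - Real.exp (-u)) + t) ≤
      t * (1 - Real.exp (-u)) * (u + (1 - Real.exp (-t))) := by
  have ht : 0 < t := lt_of_lt_of_le hu hut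
  have ha : 0 < 1 - Real.exp (-u) := by
    have : Real.exp (-u) < 1 := Real.exp_lt_one_iff.2 (by linarith)
    linarith
  have hb : 0 < 1 - Real.exp (-t) := by
    have : Real.exp (-t) < 1 := Real.exp_lt_one_iff.2 (by linarith)
    linarith
  have hpsi := psi_mono.monotoneOn (Set.mem_Ioi.2 hu) (Set.mem_Ioi.2 ht) hut
  rw [inv_sub_inv (ne_of_gt ha) (ne_of_gt hu), inv_sub_inv (ne_of_gt hb) (ne_of_gt ht),
    div_le_div_iff₀ (by positivity) (by positivity)] at hpsi
  nlinarith [hpsi]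

/-- for `t > 0`, `α > 0`, `p ∈ (0,1]`,
`(1 − e^{−tp})(1 + α/p) ≥ min { tα, (1 − e^{−t})(1 + α) }`. -/
theorem one_sub_exp_mul_one_add_div_ge_min
    (t α p : ℝ) (ht : 0 < t) (hα : 0 < α) (hp0 : 0 < p) (hp1 : p ≤ 1) :
    min (t * α) ((1 - Real.exp (-t)) * (1 + α)) ≤
      (1 - Real.exp (-(t * p))) * (1 + α / p) := by
  set u : ℝ := t * p with hu_def
  have hu : 0 < u := by positivity
  have hut : u ≤ t := by
    calc u = t * p := rfl
    _ ≤ t * 1 := by nlinarith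
    _ = t := by ring
  set a : ℝ := 1 - Real.exp (-u) with ha_def
  set b : ℝ := 1 - Real.exp (-t) with hb_def
  have ha : 0 < a := by
    have : Real.exp (-u) < 1 := Real.exp_lt_one_iff.2 (by linarith)
    simp [ha_def]; linarith
  have hb : 0 < b := by
    have : Real.exp (-t) < 1 := Real.exp_lt_one_iff.2 (by linarith)
    simp [hb_def]; linarith
  have hau : a < u := by
    have := Real.add_one_lt_exp (x := -u) (by linarith)
    simp [ha_def]; linarith
  have hdiv : α / p = α * t / u := by
    rw [hu_def]; field_simp
  rw [hdiv]
  by_cases hcase : t * α ≤ a * (1 + α * t / u)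
  · exact le_trans (min_le_left _ _) hcase
  · push_neg at hcase
    refine le_trans (min_le_right _ _) ?_
    -- from hcase : a * (1 + α*t/u) < t*α, get α*t*(u-a) > a*u
    have h1 : a * u + α * t * a < α * t * u := by
      have := mul_lt_mul_of_pos_right hcase hu
      have he : a * (1 + α * t / u) * u = a * u + α * t * a := by
        field_simp
      linarith [he ▸ this]
    have hkg : u * b ≤ t * a := key_g hu hut
    have hkp : u * b * (a + t) ≤ t * a * (u + b) := key_prod hu hut
    -- need: u * (b - a) ≤ α * (t*a - u*b)
    have h2 : u * (b - a) * (t * (u - a)) ≤ α * (t * a - u * b) * (t * (u - a)) := by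
      nlinarith [mul_nonneg (by nlinarith : (0:ℝ) ≤ α * t * (u - a) - a * u)
        (by linarith : (0:ℝ) ≤ t * a - u * b),
        mul_nonneg hu.le (sub_nonneg.2 hkp)]
    have h3 : u * (b - a) ≤ α * (t * a - u * b) :=
      le_of_mul_le_mul_right h2 (by nlinarith)
    -- conclude: b * (1 + α) ≤ a * (1 + α*t/u)
    rw [← mul_le_mul_iff_of_pos_right hu]
    have he2 : a * (1 + α * t / u) * u = a * u + α * t * a := by field_simp
    rw [he2]
    nlinarith
end

section
/- Suppose X takes only the finitely many values a₁ < a₂ < ⋯ < aₙ, where a₁ ≥ 0. Set a₀ := 0 and rᵢ := P(X ≥ aᵢ) for i = 1, …, n. Then for all t ≥ 0, M(t) = Σ_{i=1}^{n} (aᵢ − a_{i−1})·(1 − e^{−rᵢ t}). -/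
open MeasureTheory ProbabilityTheory Real Set

noncomputable section

open Filter


noncomputable def pdfG (m : ℕ) (u : ℝ) : ℝ :=
  if 0 ≤ u then u ^ m * Real.exp (-u) / m.factorial else 0

lemma pdfG_nonneg (m : ℕ) (u : ℝ) : 0 ≤ pdfG m u := by
  unfold pdfG; split_ifs with h
  · positivity
  · exact le_refl 0

lemma measurable_pdfG (m : ℕ) : Measurable (pdfG m) := by
  unfold pdfG
  exact Measurable.ite measurableSet_Ici
    (((measurable_id.pow_const m).mul (measurable_id.neg.exp)).div_const _) measurable_const

lemma gammaPDF_nat (m : ℕ) (u : ℝ) :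
    gammaPDF ((m : ℝ) + 1) 1 u = ENNReal.ofReal (pdfG m u) := by
  rw [gammaPDF_eq, pdfG]
  congr 1
  split_ifs with h
  · rw [one_rpow, Real.Gamma_nat_eq_factorial, add_sub_cancel_right, Real.rpow_natCast, one_mul]
    ring
  · rfl

lemma continuous_pdfG_core (m : ℕ) :
    Continuous (fun u : ℝ => u ^ m * Real.exp (-u) / m.factorial) := by
  exact ((continuous_pow m).mul (Real.continuous_exp.comp continuous_neg)).div_const _

lemma gammaMeasure_Iic_of_neg (m : ℕ) {x : ℝ} (hx : x < 0) :
    gammaMeasure ((m : ℝ) + 1) 1 (Iic x) = 0 := by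
  rw [gammaMeasure, withDensity_apply _ measurableSet_Iic]
  refine le_antisymm ?_ zero_le
  calc ∫⁻ u in Iic x, gammaPDF ((m : ℝ) + 1) 1 u
      ≤ ∫⁻ u in Iio 0, gammaPDF ((m : ℝ) + 1) 1 u :=
        lintegral_mono_set (fun u (hu : u ≤ x) => lt_of_le_of_lt hu hx)
    _ = 0 := lintegral_gammaPDF_of_nonpos le_rfl

lemma gammaMeasure_Iic (m : ℕ) {x : ℝ} (hx : 0 ≤ x) :
    gammaMeasure ((m : ℝ) + 1) 1 (Iic x)
      = ENNReal.ofReal (∫ u in (0:ℝ)..x, u ^ m * Real.exp (-u) / m.factorial) := by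
  rw [gammaMeasure, withDensity_apply _ measurableSet_Iic,
    lintegral_Iic_eq_lintegral_Iio_add_Icc _ hx, lintegral_gammaPDF_of_nonpos le_rfl, zero_add]
  have h1 : ∀ u ∈ Icc (0:ℝ) x, gammaPDF ((m : ℝ) + 1) 1 u
      = ENNReal.ofReal (u ^ m * Real.exp (-u) / m.factorial) := by
    intro u hu
    rw [gammaPDF_nat, pdfG, if_pos hu.1]
  rw [setLIntegral_congr_fun_ae measurableSet_Icc (ae_of_all _ h1),
    ← MeasureTheory.ofReal_integral_eq_lintegral_ofReal]
  · rw [integral_Icc_eq_integral_Ioc, ← intervalIntegral.integral_of_le hx]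
  · exact ((continuous_pdfG_core m).continuousOn).integrableOn_compact isCompact_Icc
  · exact (ae_restrict_iff' measurableSet_Icc).mpr (ae_of_all _ (fun u hu => by have := hu.1; positivity))

lemma key_hasDerivAt (m : ℕ) (u : ℝ) :
    HasDerivAt (fun u : ℝ => u ^ (m+1) * Real.exp (-u) / (m+1).factorial)
      (u ^ m * Real.exp (-u) / m.factorial - u ^ (m+1) * Real.exp (-u) / (m+1).factorial) u := by
  have h1 : HasDerivAt (fun u : ℝ => u ^ (m+1)) ((m+1 : ℕ) * u ^ m) u := by
    simpa using hasDerivAt_pow (m+1) u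
  have h2 : HasDerivAt (fun u : ℝ => Real.exp (-u)) (-Real.exp (-u)) u := by
    simpa using ((hasDerivAt_neg u).exp)
  have h3 := (h1.mul h2).div_const ((m+1).factorial : ℝ)
  refine h3.congr_deriv ?_
  have hfac : ((m+1).factorial : ℝ) = (m+1 : ℝ) * m.factorial := by
    rw [Nat.factorial_succ]; push_cast; ring
  have hne : (m.factorial : ℝ) ≠ 0 := Nat.cast_ne_zero.mpr (Nat.factorial_ne_zero m)
  have hne2 : ((m+1 : ℝ)) ≠ 0 := by positivity
  rw [hfac]
  push_cast
  field_simp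
  ring

lemma key_integral (m : ℕ) {x : ℝ} (hx : 0 ≤ x) :
    ∫ u in (0:ℝ)..x, (u ^ m * Real.exp (-u) / m.factorial) * (1 - Real.exp (-(x - u)))
      = ∫ u in (0:ℝ)..x, u ^ (m+1) * Real.exp (-u) / (m+1).factorial := by
  have hc0 : Continuous (fun u : ℝ => u ^ m * Real.exp (-u) / m.factorial) :=
    ((continuous_pow m).mul (Real.continuous_exp.comp continuous_neg)).div_const _
  have hc1 : Continuous (fun u : ℝ => u ^ (m+1) * Real.exp (-u) / (m+1).factorial) :=
    ((continuous_pow (m+1)).mul (Real.continuous_exp.comp continuous_neg)).div_const _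
  have hck : Continuous (fun u : ℝ => u ^ m * Real.exp (-x) / m.factorial) :=
    (((continuous_pow m).mul continuous_const).div_const _)
  -- pointwise identity
  have hpt : ∀ u : ℝ, (u ^ m * Real.exp (-u) / m.factorial) * (1 - Real.exp (-(x - u)))
      = ((u ^ m * Real.exp (-u) / m.factorial - u ^ (m+1) * Real.exp (-u) / (m+1).factorial)
          + u ^ (m+1) * Real.exp (-u) / (m+1).factorial)
        - u ^ m * Real.exp (-x) / m.factorial := by
    intro u
    have e : Real.exp (-u) * Real.exp (-(x - u)) = Real.exp (-x) := by
      rw [← Real.exp_add]; congr 1; ring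
    linear_combination (-(u ^ m / (m.factorial : ℝ))) * e
  rw [intervalIntegral.integral_congr (fun u _ => hpt u)]
  have hder : ∀ u ∈ Set.uIcc (0:ℝ) x,
      HasDerivAt (fun u : ℝ => u ^ (m+1) * Real.exp (-u) / (m+1).factorial)
        (u ^ m * Real.exp (-u) / m.factorial - u ^ (m+1) * Real.exp (-u) / (m+1).factorial) u :=
    fun u _ => key_hasDerivAt m u
  have hint1 : IntervalIntegrable
      (fun u : ℝ => u ^ m * Real.exp (-u) / m.factorial - u ^ (m+1) * Real.exp (-u) / (m+1).factorial)
      volume 0 x := (hc0.sub hc1).intervalIntegrable _ _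
  have hftc := intervalIntegral.integral_eq_sub_of_hasDerivAt hder hint1
  rw [intervalIntegral.integral_sub (f := fun u => u ^ m * Real.exp (-u) / m.factorial - u ^ (m+1) * Real.exp (-u) / (m+1).factorial + u ^ (m+1) * Real.exp (-u) / (m+1).factorial) (((hc0.sub hc1).add hc1).intervalIntegrable 0 x) (hck.intervalIntegrable 0 x),
    intervalIntegral.integral_add hint1 (hc1.intervalIntegrable _ _), hftc]
  have hpow : ∫ u in (0:ℝ)..x, u ^ m * Real.exp (-x) / m.factorial
      = (x ^ (m+1) / (m+1)) * Real.exp (-x) / m.factorial := by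
    simp_rw [div_eq_mul_inv]
    rw [intervalIntegral.integral_mul_const, intervalIntegral.integral_mul_const,
      integral_pow]
    push_cast
    ring
  rw [hpow]
  have hfac : ((m+1).factorial : ℝ) = (m+1 : ℝ) * m.factorial := by
    rw [Nat.factorial_succ]; push_cast; ring
  have hne : (m.factorial : ℝ) ≠ 0 := Nat.cast_ne_zero.mpr (Nat.factorial_ne_zero m)
  have hne2 : ((m+1 : ℝ)) ≠ 0 := by positivity
  rw [zero_pow (Nat.succ_ne_zero m)]
  generalize (∫ u in (0:ℝ)..x, u ^ (m+1) * Real.exp (-u) / (m+1).factorial) = I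
  rw [hfac]
  field_simp
  try ring
lemma expMeasure_Iic (y : ℝ) :
    expMeasure 1 (Iic y) = ENNReal.ofReal (if 0 ≤ y then 1 - Real.exp (-y) else 0) := by
  have h : expMeasure 1 = volume.withDensity (exponentialPDF 1) := rfl
  rw [h, withDensity_apply _ measurableSet_Iic, lintegral_exponentialPDF_eq_antiDeriv zero_lt_one]
  simp [one_mul]

lemma map_add_exp {Ω : Type*} [MeasurableSpace Ω] {μ : Measure Ω} [IsProbabilityMeasure μ]
    {U V : Ω → ℝ} (hU : Measurable U) (hV : Measurable V) (m : ℕ)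
    (hUm : μ.map U = gammaMeasure ((m : ℝ) + 1) 1)
    (hVm : μ.map V = expMeasure 1)
    (hind : ProbabilityTheory.IndepFun U V μ) :
    μ.map (fun ω => U ω + V ω) = gammaMeasure (((m+1 : ℕ) : ℝ) + 1) 1 := by
  haveI : IsProbabilityMeasure (expMeasure 1) := isProbabilityMeasure_expMeasure zero_lt_one
  haveI : IsProbabilityMeasure (gammaMeasure (((m+1:ℕ):ℝ) + 1) 1) :=
    isProbabilityMeasure_gammaMeasure (by positivity) zero_lt_one
  haveI : IsProbabilityMeasure (μ.map (fun ω => U ω + V ω)) :=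
    Measure.isProbabilityMeasure_map (hU.add hV).aemeasurable
  have hmap : μ.map (fun ω => (U ω, V ω)) = (gammaMeasure ((m:ℝ)+1) 1).prod (expMeasure 1) := by
    rw [← hUm, ← hVm]
    exact (ProbabilityTheory.indepFun_iff_map_prod_eq_prod_map_map hU.aemeasurable
      hV.aemeasurable).mp hind
  refine Measure.ext_of_Iic _ _ (fun x => ?_)
  have hs : MeasurableSet {p : ℝ × ℝ | p.1 + p.2 ≤ x} :=
    measurableSet_le (measurable_fst.add measurable_snd) measurable_const
  have step1 : μ.map (fun ω => U ω + V ω) (Iic x)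
      = ((gammaMeasure ((m:ℝ)+1) 1).prod (expMeasure 1)) {p : ℝ × ℝ | p.1 + p.2 ≤ x} := by
    rw [Measure.map_apply (f := fun ω => U ω + V ω) (hU.add hV) measurableSet_Iic, ← hmap,
      Measure.map_apply (hU.prodMk hV) hs]
    rfl
  rw [step1, Measure.prod_apply hs]
  have step2 : ∀ u : ℝ, expMeasure 1 (Prod.mk u ⁻¹' {p : ℝ × ℝ | p.1 + p.2 ≤ x})
      = ENNReal.ofReal (if 0 ≤ x - u then 1 - Real.exp (-(x - u)) else 0) := by
    intro u
    have : (Prod.mk u ⁻¹' {p : ℝ × ℝ | p.1 + p.2 ≤ x}) = Iic (x - u) := by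
      ext v; simp [le_sub_iff_add_le']
    rw [this, expMeasure_Iic]
  simp_rw [step2]
  have hmeasφ : Measurable (fun u : ℝ => ENNReal.ofReal (if 0 ≤ x - u then 1 - Real.exp (-(x - u)) else 0)) := by
    apply Measurable.ennreal_ofReal
    apply Measurable.ite (measurableSet_le measurable_const (measurable_const.sub measurable_id))
      ((measurable_const.sub (((measurable_const.sub measurable_id)).neg.exp))) measurable_const
  have hmeasg : Measurable (gammaPDF ((m:ℝ)+1) 1) := (measurable_gammaPDFReal _ _).ennreal_ofReal
  rw [gammaMeasure, lintegral_withDensity_eq_lintegral_mul _ hmeasg hmeasφ]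
  -- now a volume lintegral
  have hpt : ∀ u : ℝ, (gammaPDF ((m:ℝ)+1) 1 * fun u => ENNReal.ofReal (if 0 ≤ x - u then 1 - Real.exp (-(x - u)) else 0)) u
      = ENNReal.ofReal (Set.indicator (Icc 0 x)
          (fun u => (u ^ m * Real.exp (-u) / m.factorial) * (1 - Real.exp (-(x - u)))) u) := by
    intro u
    simp only [Pi.mul_apply, gammaPDF_nat, pdfG]
    by_cases hu : 0 ≤ u
    · by_cases hux : u ≤ x
      · rw [if_pos hu, if_pos (by linarith), Set.indicator_of_mem (by exact ⟨hu, hux⟩),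
          ← ENNReal.ofReal_mul (by positivity)]
      · rw [if_pos hu, if_neg (by intro h; exact hux (by linarith)), Set.indicator_of_notMem
          (by intro h; exact hux h.2)]
        simp
    · rw [if_neg hu, Set.indicator_of_notMem (by intro h; exact hu h.1)]
      simp
  simp_rw [hpt]
  by_cases hx : 0 ≤ x
  · have hind2 : Integrable (Set.indicator (Icc 0 x)
        (fun u => (u ^ m * Real.exp (-u) / m.factorial) * (1 - Real.exp (-(x - u))))) volume := by
      rw [integrable_indicator_iff measurableSet_Icc]
      apply ContinuousOn.integrableOn_compact isCompact_Icc
      apply Continuous.continuousOn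
      exact (continuous_pdfG_core m).mul (continuous_const.sub
        ((Real.continuous_exp.comp (continuous_const.sub continuous_id).neg)))
    rw [← MeasureTheory.ofReal_integral_eq_lintegral_ofReal hind2]
    · rw [integral_indicator measurableSet_Icc, integral_Icc_eq_integral_Ioc,
        ← intervalIntegral.integral_of_le hx, key_integral m hx, gammaMeasure_Iic (m+1) hx]
    · refine ae_of_all _ (fun u => Set.indicator_apply_nonneg (fun hu => ?_))
      have h1 : (0:ℝ) ≤ u := hu.1
      have h2 : u ≤ x := hu.2
      have h3 : Real.exp (-(x-u)) ≤ 1 := Real.exp_le_one_iff.mpr (by linarith)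
      have h4 : (0:ℝ) ≤ u ^ m * Real.exp (-u) / m.factorial := by positivity
      nlinarith
  · push_neg at hx
    rw [gammaMeasure_Iic_of_neg (m+1) hx]
    have : ∀ u : ℝ, Set.indicator (Icc 0 x)
        (fun u => (u ^ m * Real.exp (-u) / m.factorial) * (1 - Real.exp (-(x - u)))) u = 0 := by
      intro u
      rw [Set.indicator_of_notMem]
      intro h
      exact absurd (h.1.trans h.2) (not_le.mpr hx)
    simp_rw [this]
    simp
section SetupAux
open ProphetPoisson Filter
variable {Ω' : Type*} [MeasurableSpace Ω'] {μ : Measure Ω'} {X T : ℕ → Ω' → ℝ}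

lemma meas_elim (h : Setup μ X T) : ∀ i : ℕ ⊕ ℕ, Measurable (Sum.elim X T i) := by
  rintro (i | i)
  exacts [h.measX i, h.measT i]

lemma measurable_arrival (h : Setup μ X T) (k : ℕ) : Measurable (arrival T k) :=
  Finset.measurable_sum _ (fun i _ => h.measT i)

lemma indep_arrival_T (h : Setup μ X T) (m : ℕ) :
    ProbabilityTheory.IndepFun (arrival T m) (T (m+1)) μ := by
  classical
  have hdisj : Disjoint ((Finset.range (m+1)).image (Sum.inr : ℕ → ℕ ⊕ ℕ))
      ({Sum.inr (m+1)} : Finset (ℕ ⊕ ℕ)) := by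
    simp only [Finset.disjoint_right, Finset.mem_singleton, Finset.mem_image, Finset.mem_range]
    rintro x rfl ⟨j, hj, hje⟩
    have : j = m + 1 := Sum.inr.inj hje
    omega
  have h1 := h.indep.indepFun_finset _ _ hdisj (meas_elim h)
  have hφ : Measurable (fun v : (((Finset.range (m+1)).image (Sum.inr : ℕ → ℕ ⊕ ℕ) : Finset (ℕ⊕ℕ)) → ℝ) => ∑ i, v i) :=
    Finset.measurable_sum _ (fun i _ => measurable_pi_apply i)
  have hψ : Measurable (fun v : ((({Sum.inr (m+1)} : Finset (ℕ⊕ℕ)) : Finset (ℕ⊕ℕ)) → ℝ) =>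
      v ⟨Sum.inr (m+1), Finset.mem_singleton_self _⟩) := measurable_pi_apply _
  have h2 := h1.comp hφ hψ
  have e1 : ((fun v : (((Finset.range (m+1)).image (Sum.inr : ℕ → ℕ ⊕ ℕ) : Finset (ℕ⊕ℕ)) → ℝ) => ∑ i, v i) ∘
      (fun a (i : ((Finset.range (m+1)).image (Sum.inr : ℕ → ℕ ⊕ ℕ) : Finset (ℕ⊕ℕ))) => Sum.elim X T i a)) = arrival T m := by
    funext ω
    show (∑ i : (((Finset.range (m+1)).image (Sum.inr : ℕ → ℕ ⊕ ℕ)) : Finset (ℕ⊕ℕ)), Sum.elim X T (i : ℕ⊕ℕ) ω) = _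
    rw [Finset.sum_coe_sort ((Finset.range (m+1)).image (Sum.inr : ℕ → ℕ ⊕ ℕ))
      (fun i => Sum.elim X T i ω)]
    rw [Finset.sum_image (fun _ _ _ _ hx => Sum.inr.inj hx)]
    rfl
  rw [e1] at h2
  exact h2

lemma map_arrival (h : Setup μ X T) : ∀ m : ℕ, μ.map (arrival T m) = gammaMeasure ((m:ℝ)+1) 1
  | 0 => by
      have e : arrival T 0 = T 0 := funext fun ω => Finset.sum_range_one (f := fun i => T i ω)
      rw [e, h.expT 0]
      show gammaMeasure 1 1 = _
      norm_num
  | (m+1) => by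
      haveI := h.prob
      have hrec := map_arrival h m
      have hsum : arrival T (m+1) = fun ω => arrival T m ω + T (m+1) ω :=
        funext fun ω => Finset.sum_range_succ (fun i => T i ω) (m+1)
      rw [hsum]
      have hr := map_add_exp (measurable_arrival h m) (h.measT (m+1)) m hrec (h.expT (m+1))
        (indep_arrival_T h m)
      rw [hr]

lemma measure_tail (h : Setup μ X T) (m : ℕ) (t : ℝ) :
    μ {ω | t < arrival T m ω} = ∫⁻ u in Ioi t, ENNReal.ofReal (pdfG m u) := by
  have e : {ω | t < arrival T m ω} = arrival T m ⁻¹' Ioi t := rfl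
  rw [e, ← Measure.map_apply (measurable_arrival h m) measurableSet_Ioi, map_arrival h m,
    gammaMeasure, withDensity_apply _ measurableSet_Ioi]
  exact setLIntegral_congr_fun_ae measurableSet_Ioi (ae_of_all _ fun u _ => gammaPDF_nat m u)

end SetupAux
section SetupAux2
open ProphetPoisson Filter
variable {Ω' : Type*} [MeasurableSpace Ω'] {μ : Measure Ω'} {X T : ℕ → Ω' → ℝ}

lemma prod_X (h : Setup μ X T) (m : ℕ) (B : ℕ → Set ℝ) (hB : ∀ i, MeasurableSet (B i)) :
    μ (⋂ i ∈ Finset.range m, X i ⁻¹' B i) = ∏ i ∈ Finset.range m, μ (X i ⁻¹' B i) := by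
  classical
  have key := h.indep.measure_inter_preimage_eq_mul
    ((Finset.range m).image (Sum.inl : ℕ → ℕ⊕ℕ))
    (sets := Sum.elim B (fun _ => univ))
    (by rintro (i|i) _; exacts [hB i, MeasurableSet.univ])
  have e1 : (⋂ i ∈ (Finset.range m).image (Sum.inl : ℕ → ℕ⊕ℕ),
      Sum.elim X T i ⁻¹' Sum.elim B (fun _ => univ) i)
      = ⋂ i ∈ Finset.range m, X i ⁻¹' B i := Finset.set_biInter_finset_image
  have e2 : (∏ i ∈ (Finset.range m).image (Sum.inl : ℕ → ℕ⊕ℕ),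
      μ (Sum.elim X T i ⁻¹' Sum.elim B (fun _ => univ) i))
      = ∏ i ∈ Finset.range m, μ (X i ⁻¹' B i) :=
    Finset.prod_image (fun _ _ _ _ hx => Sum.inl.inj hx)
  rw [e1, e2] at key
  exact key

lemma measure_X_pre (h : Setup μ X T) (k : ℕ) {s : Set ℝ} (hs : MeasurableSet s) :
    μ (X k ⁻¹' s) = μ (X 0 ⁻¹' s) := by
  rw [← Measure.map_apply (h.measX k) hs, h.identX k, Measure.map_apply (h.measX 0) hs]

lemma measure_Dm (h : Setup μ X T) (c : ℝ) (m : ℕ) :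
    μ {ω | (∀ j < m, X j ω < c) ∧ c ≤ X m ω}
      = μ (X 0 ⁻¹' Iio c) ^ m * μ (X 0 ⁻¹' Ici c) := by
  classical
  set B : ℕ → Set ℝ := fun i => if i < m then Iio c else Ici c with hB
  have hBm : ∀ i, MeasurableSet (B i) := by
    intro i; rw [hB]; dsimp only
    split_ifs
    exacts [measurableSet_Iio, measurableSet_Ici]
  have e : {ω | (∀ j < m, X j ω < c) ∧ c ≤ X m ω} = ⋂ i ∈ Finset.range (m+1), X i ⁻¹' B i := by
    ext ω
    simp only [mem_setOf_eq, mem_iInter, Finset.mem_range, mem_preimage]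
    constructor
    · rintro ⟨h1, h2⟩ i hi
      by_cases him : i < m
      · simpa [hB, him] using h1 i him
      · have : i = m := by omega
        subst this
        simpa [hB, him] using h2
    · intro hall
      refine ⟨fun j hj => ?_, ?_⟩
      · have := hall j (by omega); simpa [hB, hj] using this
      · have := hall m (by omega); simpa [hB] using this
  rw [e, prod_X h (m+1) B hBm, Finset.prod_range_succ]
  have e2 : ∀ i ∈ Finset.range m, μ (X i ⁻¹' B i) = μ (X 0 ⁻¹' Iio c) := by
    intro i hi
    rw [Finset.mem_range] at hi
    rw [hB]
    simp only [if_pos hi]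
    exact measure_X_pre h i measurableSet_Iio
  rw [Finset.prod_congr rfl e2, Finset.prod_const, Finset.card_range]
  congr 1
  rw [hB]
  simp only [lt_irrefl, if_neg (lt_irrefl m)]
  exact measure_X_pre h m measurableSet_Ici

lemma indep_vec (h : Setup μ X T) (m : ℕ) :
    ProbabilityTheory.IndepFun (fun ω (j : Fin (m+1)) => X j ω)
      (fun ω (j : Fin (m+1)) => T j ω) μ := by
  classical
  have hdisj : Disjoint ((Finset.range (m+1)).image (Sum.inl : ℕ → ℕ⊕ℕ))
      ((Finset.range (m+1)).image (Sum.inr : ℕ → ℕ⊕ℕ)) := by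
    simp only [Finset.disjoint_left, Finset.mem_image, Finset.mem_range]
    rintro x ⟨j, hj, rfl⟩ ⟨j', hj', hje⟩
    exact Sum.inl_ne_inr hje.symm
  have h1 := h.indep.indepFun_finset _ _ hdisj (meas_elim h)
  have hφ : Measurable (fun v : (((Finset.range (m+1)).image (Sum.inl : ℕ → ℕ⊕ℕ) : Finset (ℕ⊕ℕ)) → ℝ)
      => (fun j : Fin (m+1) => v ⟨Sum.inl (j:ℕ), Finset.mem_image.mpr ⟨j, Finset.mem_range.mpr j.isLt, rfl⟩⟩)) :=
    measurable_pi_lambda _ (fun j => measurable_pi_apply _)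
  have hψ : Measurable (fun v : (((Finset.range (m+1)).image (Sum.inr : ℕ → ℕ⊕ℕ) : Finset (ℕ⊕ℕ)) → ℝ)
      => (fun j : Fin (m+1) => v ⟨Sum.inr (j:ℕ), Finset.mem_image.mpr ⟨j, Finset.mem_range.mpr j.isLt, rfl⟩⟩)) :=
    measurable_pi_lambda _ (fun j => measurable_pi_apply _)
  exact h1.comp hφ hψ

lemma measure_Fm (h : Setup μ X T) (c t : ℝ) (m : ℕ) :
    μ ({ω | (∀ j < m, X j ω < c) ∧ c ≤ X m ω} ∩ {ω | t < arrival T m ω})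
      = μ {ω | (∀ j < m, X j ω < c) ∧ c ≤ X m ω} * μ {ω | t < arrival T m ω} := by
  classical
  set Dset : Set (Fin (m+1) → ℝ) :=
    {v | (∀ j : Fin (m+1), (j:ℕ) < m → v j < c) ∧ c ≤ v ⟨m, Nat.lt_succ_self m⟩} with hDset
  set Cset : Set (Fin (m+1) → ℝ) := {w | t < ∑ j, w j} with hCset
  have hD : MeasurableSet Dset := by
    rw [hDset]
    apply MeasurableSet.inter
    · show MeasurableSet {v : Fin (m+1) → ℝ | ∀ j : Fin (m+1), (j:ℕ) < m → v j < c}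
      rw [setOf_forall]
      refine MeasurableSet.iInter (fun j => ?_)
      by_cases hj : (j:ℕ) < m
      · simp only [hj, true_implies]
        exact measurableSet_lt (measurable_pi_apply j) measurable_const
      · simp only [hj, false_implies, setOf_true]
        exact MeasurableSet.univ
    · exact measurableSet_le measurable_const (measurable_pi_apply _)
  have hC : MeasurableSet Cset :=
    measurableSet_lt measurable_const (Finset.measurable_sum _ (fun j _ => measurable_pi_apply j))
  have key := (indep_vec h m).measure_inter_preimage_eq_mul _ _ hD hC
  have e1 : (fun ω (j : Fin (m+1)) => X j ω) ⁻¹' Dset = {ω | (∀ j < m, X j ω < c) ∧ c ≤ X m ω} := by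
    ext ω
    simp only [mem_preimage, hDset, mem_setOf_eq]
    constructor
    · rintro ⟨h1, h2⟩
      exact ⟨fun j hj => h1 ⟨j, by omega⟩ hj, h2⟩
    · rintro ⟨h1, h2⟩
      exact ⟨fun j hj => h1 j hj, h2⟩
  have e2 : (fun ω (j : Fin (m+1)) => T j ω) ⁻¹' Cset = {ω | t < arrival T m ω} := by
    ext ω
    simp only [mem_preimage, hCset, mem_setOf_eq]
    rw [Fin.sum_univ_eq_sum_range (fun j => T j ω) (m+1)]
    rfl
  rw [e1, e2] at key
  exact key

end SetupAux2
section MainProb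
open ProphetPoisson Filter Topology
variable {Ω' : Type*} [MeasurableSpace Ω'] {μ : Measure Ω'} {X T : ℕ → Ω' → ℝ}

lemma measure_union_arrival (h : Setup μ X T) (c t : ℝ) (ht : 0 ≤ t) :
    (μ (⋃ k, {ω | arrival T k ω ≤ t ∧ c ≤ X k ω})).toReal
      = 1 - Real.exp (-((μ (X 0 ⁻¹' Ici c)).toReal * t)) := by
  classical
  haveI := h.prob
  set rE := μ (X 0 ⁻¹' Ici c) with hrE
  set qE := μ (X 0 ⁻¹' Iio c) with hqE
  set Aset := ⋃ k, {ω | arrival T k ω ≤ t ∧ c ≤ X k ω} with hAset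
  have hmeasAk : ∀ k, MeasurableSet {ω | arrival T k ω ≤ t ∧ c ≤ X k ω} := by
    intro k
    rw [setOf_and]
    exact (measurableSet_le (measurable_arrival h k) measurable_const).inter
      (measurableSet_le measurable_const (h.measX k))
  have hmeasA : MeasurableSet Aset := MeasurableSet.iUnion hmeasAk
  by_cases hr0 : rE = 0
  · have hsub : Aset ⊆ ⋃ k, X k ⁻¹' Ici c := by
      intro ω hω
      rw [mem_iUnion] at hω ⊢
      rcases hω with ⟨k, hk⟩
      exact ⟨k, hk.2⟩
    have hnull : μ (⋃ k, X k ⁻¹' (Ici c)) = 0 :=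
      measure_iUnion_null fun k => by rw [measure_X_pre h k measurableSet_Ici, ← hrE, hr0]
    have hA0 : μ Aset = 0 := measure_mono_null hsub hnull
    rw [hA0, hr0]
    simp
  -- main case
  have hrfin : rE ≠ ⊤ := measure_ne_top μ _
  have hqfin : qE ≠ ⊤ := measure_ne_top μ _
  set r := rE.toReal with hrdef
  set q := qE.toReal with hqdef
  have hqr : qE + rE = 1 := by
    rw [hqE, hrE, ← measure_union (Disjoint.preimage _ (Iio_disjoint_Ici le_rfl))
      (h.measX 0 measurableSet_Ici), ← preimage_union, Iio_union_Ici, preimage_univ,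
      measure_univ]
  have hqr_real : q + r = 1 := by
    rw [hqdef, hrdef, ← ENNReal.toReal_add hqfin hrfin, hqr, ENNReal.toReal_one]
  have hrpos : 0 < r := ENNReal.toReal_pos hr0 hrfin
  have hq1 : qE < 1 := by
    refine lt_of_le_of_ne prob_le_one (fun h1 => hr0 ?_)
    have h2 : qE + rE = qE + 0 := by rw [hqr, h1, add_zero]
    exact (ENNReal.add_right_inj (by rw [h1]; exact ENNReal.one_ne_top)).mp h2
  set F : ℕ → Set Ω' := fun m =>
    {ω | (∀ j < m, X j ω < c) ∧ c ≤ X m ω} ∩ {ω | t < arrival T m ω} with hF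
  set G := ⋂ k, {ω | X k ω < c} with hG
  set N := ⋃ j, T j ⁻¹' Iio 0 with hN
  have hNnull : μ N = 0 := by
    refine measure_iUnion_null (fun j => ?_)
    rw [← Measure.map_apply (h.measT j) measurableSet_Iio, h.expT j]
    show gammaMeasure 1 1 (Iio 0) = 0
    rw [gammaMeasure, withDensity_apply _ measurableSet_Iio]
    exact lintegral_gammaPDF_of_nonpos le_rfl
  have hmeasF : ∀ m, MeasurableSet (F m) := by
    intro m
    refine MeasurableSet.inter ?_ (measurableSet_lt measurable_const (measurable_arrival h m))
    rw [setOf_and]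
    refine MeasurableSet.inter ?_ (measurableSet_le measurable_const (h.measX m))
    rw [setOf_forall]
    refine MeasurableSet.iInter (fun j => ?_)
    by_cases hj : j < m
    · simp only [hj, true_implies]
      exact measurableSet_lt (h.measX j) measurable_const
    · simp only [hj, false_implies, setOf_true]
      exact MeasurableSet.univ
  have hmeasG : MeasurableSet G :=
    MeasurableSet.iInter (fun k => measurableSet_lt (h.measX k) measurable_const)
  -- decomposition
  have hseteq : Asetᶜ ∩ Nᶜ = (G ∪ ⋃ m, F m) ∩ Nᶜ := by
    ext ω
    simp only [mem_inter_iff, mem_compl_iff, hAset, mem_iUnion, mem_setOf_eq, not_exists,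
      hN, mem_preimage, mem_Iio, hG, mem_iInter, mem_union, hF, mem_inter_iff]
    constructor
    · rintro ⟨hA, hNω⟩
      refine ⟨?_, hNω⟩
      by_cases hex : ∃ k, c ≤ X k ω
      · right
        refine ⟨Nat.find hex, ⟨⟨fun j hj => ?_, Nat.find_spec hex⟩, ?_⟩⟩
        · exact lt_of_not_ge (Nat.find_min hex hj)
        · by_contra hle
          exact hA (Nat.find hex) ⟨le_of_not_gt hle, Nat.find_spec hex⟩
      · left
        push_neg at hex
        exact hex
    · rintro ⟨hGF, hNω⟩
      refine ⟨?_, hNω⟩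
      intro k hk
      rcases hGF with hGω | ⟨m, ⟨⟨hlt, hcm⟩, harr⟩⟩
      · exact absurd hk.2 (not_le.mpr (hGω k))
      · have hmk : m ≤ k := by
          by_contra hmk
          exact absurd hk.2 (not_le.mpr (hlt k (by omega)))
        have hmono : arrival T m ω ≤ arrival T k ω := by
          refine Finset.sum_le_sum_of_subset_of_nonneg ?_ ?_
          · exact Finset.range_subset_range.mpr (by omega)
          · intro j _ _
            exact le_of_not_gt (hNω j)
        exact absurd hk.1 (not_le.mpr (lt_of_lt_of_le harr hmono))
  have hdecomp : μ Asetᶜ = μ G + ∑' m, μ (F m) := by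
    have h1 : μ Asetᶜ = μ (Asetᶜ ∩ Nᶜ) := (measure_inter_conull (by rwa [compl_compl])).symm
    have h2 : μ ((G ∪ ⋃ m, F m) ∩ Nᶜ) = μ (G ∪ ⋃ m, F m) :=
      measure_inter_conull (by rwa [compl_compl])
    rw [h1, hseteq, h2, measure_union ?_ (MeasurableSet.iUnion hmeasF), measure_iUnion ?_ hmeasF]
    · intro m m' hmm'
      rcases Nat.lt_or_ge m m' with hlt | hge
      · refine Set.disjoint_left.mpr (fun ω hω hω' => ?_)
        exact absurd hω.1.2 (not_le.mpr (hω'.1.1 m hlt))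
      · have hlt : m' < m := by omega
        refine Set.disjoint_left.mpr (fun ω hω hω' => ?_)
        exact absurd hω'.1.2 (not_le.mpr (hω.1.1 m' hlt))
    · refine Set.disjoint_left.mpr (fun ω hω hω' => ?_)
      rw [mem_iUnion] at hω'
      rcases hω' with ⟨m, hm⟩
      have hωm := mem_iInter.mp hω m
      exact absurd hm.1.2 (not_le.mpr hωm)
  have hG0 : μ G = 0 := by
    have hle : ∀ m, μ G ≤ qE ^ m := by
      intro m
      have hsub : G ⊆ ⋂ i ∈ Finset.range m, X i ⁻¹' Iio c := by
        intro ω hω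
        rw [mem_iInter₂]
        intro i _
        exact mem_iInter.mp hω i
      calc μ G ≤ μ (⋂ i ∈ Finset.range m, X i ⁻¹' Iio c) := measure_mono hsub
        _ = ∏ i ∈ Finset.range m, μ (X i ⁻¹' Iio c) :=
            prod_X h m (fun _ => Iio c) (fun _ => measurableSet_Iio)
        _ = qE ^ m := by
            rw [Finset.prod_congr rfl (fun i _ => measure_X_pre h i measurableSet_Iio),
              Finset.prod_const, Finset.card_range]
    have := ge_of_tendsto' (ENNReal.tendsto_pow_atTop_nhds_zero_of_lt_one hq1) hle
    exact le_antisymm this zero_le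
  -- expression of each F m
  have hFm : ∀ m, μ (F m) = (qE ^ m * rE) * ∫⁻ u in Ioi t, ENNReal.ofReal (pdfG m u) := by
    intro m
    rw [hF]
    rw [measure_Fm h c t m, measure_Dm h c m, measure_tail h m t]
  -- series evaluation
  have hmeaspdf : ∀ m : ℕ, Measurable (fun u => ENNReal.ofReal (pdfG m u)) :=
    fun m => (measurable_pdfG m).ennreal_ofReal
  have hqof : qE = ENNReal.ofReal q := (ENNReal.ofReal_toReal hqfin).symm
  have hrof : rE = ENNReal.ofReal r := (ENNReal.ofReal_toReal hrfin).symm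
  have hq_nonneg : 0 ≤ q := ENNReal.toReal_nonneg
  have hseries : ∑' m, μ (F m) = ∫⁻ u in Ioi t, ENNReal.ofReal (r * Real.exp (-(r * u))) := by
    have h1 : ∀ m : ℕ, μ (F m) = ∫⁻ u in Ioi t, (qE ^ m * rE) * ENNReal.ofReal (pdfG m u) := by
      intro m
      rw [hFm m, ← lintegral_const_mul _ (hmeaspdf m)]
    simp_rw [h1]
    rw [← lintegral_tsum (fun m => ((hmeaspdf m).const_mul _).aemeasurable)]
    refine setLIntegral_congr_fun_ae measurableSet_Ioi (ae_of_all _ (fun u hu => ?_))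
    have hu0 : 0 ≤ u := le_trans ht (le_of_lt hu)
    have hterm : ∀ m : ℕ, (qE ^ m * rE) * ENNReal.ofReal (pdfG m u)
        = ENNReal.ofReal ((r * Real.exp (-u)) * ((q*u) ^ m / m.factorial)) := by
      intro m
      rw [hqof, hrof, ← ENNReal.ofReal_pow hq_nonneg,
        ← ENNReal.ofReal_mul (by positivity), ← ENNReal.ofReal_mul (by positivity)]
      congr 1
      rw [pdfG, if_pos hu0, mul_pow]
      ring
    simp_rw [hterm]
    have hsumm : Summable (fun m : ℕ => (r * Real.exp (-u)) * ((q*u) ^ m / m.factorial)) :=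
      (Real.summable_pow_div_factorial (q*u)).mul_left _
    rw [← ENNReal.ofReal_tsum_of_nonneg (fun m => by positivity) hsumm]
    congr 1
    rw [tsum_mul_left]
    have hexp : ∑' m : ℕ, (q*u)^m / (m.factorial : ℝ) = Real.exp (q*u) := by
      have h2 := congrFun Real.exp_eq_exp_ℝ (q*u)
      rw [NormedSpace.exp_eq_tsum_div] at h2
      exact h2.symm
    rw [hexp, mul_assoc, ← Real.exp_add,
      show -u + q * u = -(r * u) by linear_combination u * hqr_real]
  have hval : ∫⁻ u in Ioi t, ENNReal.ofReal (r * Real.exp (-(r * u)))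
      = ENNReal.ofReal (Real.exp (-(r * t))) := by
    have hInt : IntegrableOn (fun u => r * Real.exp (-(r * u))) (Ioi t) := by
      have h3 := (exp_neg_integrableOn_Ioi t hrpos).const_mul r
      simpa [neg_mul, IntegrableOn] using h3
    rw [← MeasureTheory.ofReal_integral_eq_lintegral_ofReal hInt
      (ae_of_all _ (fun u => by positivity))]
    congr 1
    have hcont : ContinuousWithinAt (fun u : ℝ => -Real.exp (-(r * u))) (Ici t) t :=
      ((((Real.continuous_exp.comp (continuous_const.mul continuous_id).neg)).neg).continuousWithinAt)
    have hderiv : ∀ u ∈ Ioi t, HasDerivAt (fun u : ℝ => -Real.exp (-(r * u)))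
        (r * Real.exp (-(r * u))) u := fun u _ => hasDerivAt_neg_exp_mul_exp
    have htend : Tendsto (fun u : ℝ => -Real.exp (-(r * u))) atTop (𝓝 0) := by
      have h1 : Tendsto (fun u : ℝ => r * u) atTop atTop :=
        Filter.Tendsto.const_mul_atTop hrpos tendsto_id
      have h2 : Tendsto (fun u : ℝ => Real.exp (-(r * u))) atTop (𝓝 0) :=
        Real.tendsto_exp_neg_atTop_nhds_zero.comp h1
      simpa using h2.neg
    have h4 := MeasureTheory.integral_Ioi_of_hasDerivAt_of_tendsto hcont hderiv hInt htend
    rw [h4]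
    simp
  have hAc : μ Asetᶜ = ENNReal.ofReal (Real.exp (-(r * t))) := by
    rw [hdecomp, hG0, zero_add, hseries, hval]
  have hA : μ Aset = 1 - ENNReal.ofReal (Real.exp (-(r * t))) := by
    have h1 : μ Asetᶜ = 1 - μ Aset := prob_compl_eq_one_sub hmeasA
    rw [h1] at hAc
    rw [← hAc, ENNReal.sub_sub_cancel ENNReal.one_ne_top prob_le_one]
  rw [hA, ENNReal.toReal_sub_of_le
    (ENNReal.ofReal_le_one.mpr (Real.exp_le_one_iff.mpr (by nlinarith))) ENNReal.one_ne_top,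
    ENNReal.toReal_one, ENNReal.toReal_ofReal (Real.exp_nonneg _)]

end MainProb
open ProphetPoisson in
/-- if `X` takes only the values `a 1 < a 2 < ⋯ < a n` with `a 1 ≥ 0`, and
`a 0 = 0`, `rᵢ = P(X ≥ a i)`, then `M(t) = ∑_{i=1}^n (a i − a (i−1))·(1 − e^{−rᵢ t})`
for all `t ≥ 0`. -/
theorem Mval_eq_sum_finite_values
    {Ω : Type*} [MeasurableSpace Ω] (μ : Measure Ω) (X T : ℕ → Ω → ℝ)
    (hsetup : Setup μ X T)
    (n : ℕ) (hn : 1 ≤ n) (a : ℕ → ℝ)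
    (ha0 : a 0 = 0) (ha1 : 0 ≤ a 1)
    (hmono : ∀ i, 1 ≤ i → i < n → a i < a (i + 1))
    (hvals : ∀ k ω, ∃ j, 1 ≤ j ∧ j ≤ n ∧ X k ω = a j)
    (t : ℝ) (ht : 0 ≤ t) :
    Mval μ X T t =
      ∑ i ∈ Finset.Icc 1 n,
        (a i - a (i - 1)) * (1 - Real.exp (-((μ {ω | a i ≤ X 0 ω}).toReal * t))) := by
  classical
  haveI := hsetup.prob
  set A : ℕ → Set Ω := fun i => ⋃ k, {ω | arrival T k ω ≤ t ∧ a i ≤ X k ω} with hA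
  have hmeasA : ∀ i, MeasurableSet (A i) := by
    intro i
    refine MeasurableSet.iUnion (fun k => ?_)
    rw [setOf_and]
    exact (measurableSet_le (measurable_arrival hsetup k) measurable_const).inter
      (measurableSet_le measurable_const (hsetup.measX k))
  have hamono : ∀ i j, 1 ≤ i → i ≤ j → j ≤ n → a i ≤ a j := by
    intro i j h1 hij hjn
    induction j with
    | zero => omega
    | succ j ih =>
      rcases Nat.lt_or_ge i (j+1) with hlt | hge
      · exact le_trans (ih (by omega) (by omega))
          (le_of_lt (hmono j (by omega) (by omega)))
      · have he : i = j+1 := by omega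
        rw [he]
  have hapos : ∀ i, 1 ≤ i → i ≤ n → 0 ≤ a i := fun i h1 h2 =>
    le_trans ha1 (hamono 1 i le_rfl h1 h2)
  have hAsub : ∀ i j, 1 ≤ i → i ≤ j → j ≤ n → A j ⊆ A i := by
    intro i j h1 hij hjn ω hω
    rw [mem_iUnion] at hω ⊢
    rcases hω with ⟨k, hk1, hk2⟩
    exact ⟨k, hk1, le_trans (hamono i j h1 hij hjn) hk2⟩
  have hpt : ∀ ω, maxByT X T t ω
      = ∑ i ∈ Finset.Icc 1 n, (a i - a (i-1)) * (if ω ∈ A i then (1:ℝ) else 0) := by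
    intro ω
    by_cases hω1 : ω ∈ A 1
    · set s := (Finset.Icc 1 n).filter (fun i => ω ∈ A i) with hs
      have hs_ne : s.Nonempty := ⟨1, Finset.mem_filter.mpr ⟨Finset.mem_Icc.mpr ⟨le_rfl, hn⟩, hω1⟩⟩
      set J := s.max' hs_ne with hJ
      have hJs : J ∈ s := Finset.max'_mem s hs_ne
      have hJmem : J ∈ Finset.Icc 1 n := (Finset.mem_filter.mp hJs).1
      have hJA : ω ∈ A J := (Finset.mem_filter.mp hJs).2
      have hJ1 : 1 ≤ J := (Finset.mem_Icc.mp hJmem).1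
      have hJn : J ≤ n := (Finset.mem_Icc.mp hJmem).2
      have hJmax : ∀ i ∈ Finset.Icc 1 n, ω ∈ A i → i ≤ J := fun i hi hAi =>
        Finset.le_max' s i (Finset.mem_filter.mpr ⟨hi, hAi⟩)
      have hRHS : ∑ i ∈ Finset.Icc 1 n, (a i - a (i-1)) * (if ω ∈ A i then (1:ℝ) else 0)
          = a J := by
        have hcong : ∀ i ∈ Finset.Icc 1 n, (a i - a (i-1)) * (if ω ∈ A i then (1:ℝ) else 0)
            = if i ≤ J then (a i - a (i-1)) else 0 := by
          intro i hi
          rw [Finset.mem_Icc] at hi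
          by_cases hiJ : i ≤ J
          · rw [if_pos hiJ, if_pos (hAsub i J hi.1 hiJ hJn hJA), mul_one]
          · rw [if_neg hiJ, if_neg (fun hAi => hiJ (hJmax i (Finset.mem_Icc.mpr hi) hAi)),
              mul_zero]
        rw [Finset.sum_congr rfl hcong, ← Finset.sum_filter]
        have hfe : (Finset.Icc 1 n).filter (fun i => i ≤ J) = Finset.Icc 1 J := by
          ext i
          simp only [Finset.mem_filter, Finset.mem_Icc]
          omega
        rw [hfe, ← Finset.Ico_add_one_right_eq_Icc, Finset.sum_Ico_eq_sum_range]
        have hce : ∀ i ∈ Finset.range (J + 1 - 1), a (1 + i) - a (1 + i - 1)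
            = a (i+1) - a i := by
          intro i _
          rw [show 1 + i = i + 1 from by omega, Nat.add_sub_cancel]
        rw [Finset.sum_congr rfl hce]
        have : J + 1 - 1 = J := by omega
        rw [this, Finset.sum_range_sub (f := a) J, ha0, sub_zero]
      have hbdd : BddAbove (Set.range (fun k => if arrival T k ω ≤ t then X k ω else 0)) := by
        refine ⟨max (a n) 0, ?_⟩
        rintro x ⟨k, rfl⟩
        dsimp only
        split_ifs with hk
        · obtain ⟨j, hj1, hjn, hXj⟩ := hvals k ω
          rw [hXj]
          exact le_max_of_le_left (hamono j n hj1 hjn le_rfl)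
        · exact le_max_right _ _
      have hle : maxByT X T t ω ≤ a J := by
        rw [maxByT]
        refine ciSup_le (fun k => ?_)
        split_ifs with hk
        · obtain ⟨j, hj1, hjn, hXj⟩ := hvals k ω
          have hmem : ω ∈ A j := mem_iUnion.mpr ⟨k, hk, le_of_eq hXj.symm⟩
          have hjJ : j ≤ J := hJmax j (Finset.mem_Icc.mpr ⟨hj1, hjn⟩) hmem
          rw [hXj]
          exact hamono j J hj1 hjJ hJn
        · exact hapos J hJ1 hJn
      have hge : a J ≤ maxByT X T t ω := by
        rcases mem_iUnion.mp hJA with ⟨k, hk1, hk2⟩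
        calc a J ≤ (if arrival T k ω ≤ t then X k ω else 0) := by
              rw [if_pos hk1]; exact hk2
          _ ≤ maxByT X T t ω := le_ciSup hbdd k
      rw [hRHS]
      exact le_antisymm hle hge
    · have hz : ∀ i ∈ Finset.Icc 1 n, (a i - a (i-1)) * (if ω ∈ A i then (1:ℝ) else 0) = 0 := by
        intro i hi
        rw [Finset.mem_Icc] at hi
        rw [if_neg (fun hmem => hω1 (hAsub 1 i le_rfl hi.1 hi.2 hmem)), mul_zero]
      rw [Finset.sum_congr rfl hz, Finset.sum_const_zero, maxByT]
      have hterm : ∀ k, (if arrival T k ω ≤ t then X k ω else 0) = 0 := by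
        intro k
        split_ifs with hk
        · exfalso
          obtain ⟨j, hj1, hjn, hXj⟩ := hvals k ω
          apply hω1
          refine mem_iUnion.mpr ⟨k, hk, ?_⟩
          rw [hXj]
          exact hamono 1 j le_rfl hj1 hjn
        · rfl
      simp_rw [hterm]
      exact ciSup_const
  have hint : Mval μ X T t = ∑ i ∈ Finset.Icc 1 n, (a i - a (i-1)) * (μ (A i)).toReal := by
    have hfe : (fun ω => maxByT X T t ω)
        = fun ω => ∑ i ∈ Finset.Icc 1 n,
            (a i - a (i-1)) * Set.indicator (A i) (fun _ => (1:ℝ)) ω := by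
      funext ω
      rw [hpt ω]
      refine Finset.sum_congr rfl (fun i _ => ?_)
      simp [Set.indicator_apply]
    rw [Mval, hfe,
      integral_finset_sum _ (fun i _ => ((integrable_const (1:ℝ)).indicator (hmeasA i)).const_mul _)]
    refine Finset.sum_congr rfl (fun i _ => ?_)
    rw [MeasureTheory.integral_const_mul, MeasureTheory.integral_indicator_const (1:ℝ) (hmeasA i),
      smul_eq_mul, mul_one, measureReal_def]
  rw [hint]
  refine Finset.sum_congr rfl (fun i hi => ?_)
  congr 1
  have hkey := measure_union_arrival hsetup (a i) t ht
  have hset : X 0 ⁻¹' Ici (a i) = {ω | a i ≤ X 0 ω} := rfl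
  rw [hset] at hkey
  exact hkey
end
end

section
/- Let γ(t) := t/(1 − e^{−t}) and β(t) := 1 − (1 + log γ(t))/γ(t). Define f̂(t) := β(t)(1 − e^{−t})/(β(t) + 1 − e^{−t}) and ĝ(t) := (1/2)·[(1 + e^{−t})(1 − exp(−t/(e^t + 1))) − e^{−t}(1 − e^{−t})] for t > 0. Then f̂(t) − ĝ(t) = O(t³) as t ↓ 0; that is, there exist constants C > 0 and δ > 0 such that |f̂(t) − ĝ(t)| ≤ C·t³ for all 0 < t < δ. -/
set_option maxHeartbeats 4000000

lemma exp_taylor3 {x : ℝ} (hx : |x| ≤ 1) : |Real.exp x - (1 + x + x^2/2)| ≤ |x|^3 := by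
  have h := Real.exp_bound hx (by norm_num : (0:ℕ) < 3)
  have hs : ∑ m ∈ Finset.range 3, x ^ m / m.factorial = 1 + x + x^2/2 := by
    simp [Finset.sum_range_succ, Nat.factorial]
  rw [hs] at h
  have h3 : (0:ℝ) ≤ |x|^3 := by positivity
  calc |Real.exp x - (1 + x + x^2/2)| ≤ |x|^3 * ((3:ℕ).succ / ((3:ℕ).factorial * 3)) := h
    _ ≤ |x|^3 := by
        have : ((3:ℕ).succ / ((3:ℕ).factorial * 3) : ℝ) = 2/9 := by norm_num [Nat.factorial]
        rw [this]; nlinarith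

lemma exp_taylor4 {x : ℝ} (hx : |x| ≤ 1) : |Real.exp x - (1 + x + x^2/2 + x^3/6)| ≤ |x|^4 := by
  have h := Real.exp_bound hx (by norm_num : (0:ℕ) < 4)
  have hs : ∑ m ∈ Finset.range 4, x ^ m / m.factorial = 1 + x + x^2/2 + x^3/6 := by
    simp [Finset.sum_range_succ, Nat.factorial]
  rw [hs] at h
  have h3 : (0:ℝ) ≤ |x|^4 := by positivity
  calc |Real.exp x - (1 + x + x^2/2 + x^3/6)| ≤ |x|^4 * ((4:ℕ).succ / ((4:ℕ).factorial * 4)) := h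
    _ ≤ |x|^4 := by
        have : ((4:ℕ).succ / ((4:ℕ).factorial * 4) : ℝ) = 5/96 := by norm_num [Nat.factorial]
        rw [this]; nlinarith

lemma log_taylor2 {y : ℝ} (hy0 : 0 < y) (hy : y ≤ 1/2) :
    |Real.log (1 + y) - (y - y^2/2)| ≤ 2 * y^3 := by
  have h := Real.abs_log_sub_add_sum_range_le (x := -y) (by rw [abs_neg, abs_of_pos hy0]; linarith) 2
  have hs : ∑ i ∈ Finset.range 2, (-y) ^ (i + 1) / (i + 1) = -y + y^2/2 := by
    simp [Finset.sum_range_succ]; ring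
  rw [hs, abs_neg, abs_of_pos hy0, show (1 : ℝ) - -y = 1 + y by ring] at h
  have heq : Real.log (1+y) - (y - y^2/2) = (-y + y^2/2) + Real.log (1+y) := by ring
  rw [heq]
  calc |(-y + y^2/2) + Real.log (1+y)| ≤ y^(2+1) / (1 - y) := h
    _ ≤ 2 * y^3 := by
        rw [show (2:ℕ)+1 = 3 from rfl, div_le_iff₀ (by linarith)]; nlinarith [pow_pos hy0 3]

noncomputable section

namespace ProphetPoisson

/-- `γ(t) = t/(1 − e^{−t})`. -/
def gammaT (t : ℝ) : ℝ := t / (1 - Real.exp (-t))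

/-- `β(t) = 1 − (1 + log γ(t))/γ(t)`. -/
def betaT (t : ℝ) : ℝ := 1 - (1 + Real.log (gammaT t)) / gammaT t

/-- `f̂(t) = β(t)(1 − e^{−t})/(β(t) + 1 − e^{−t})`. -/
def fHat (t : ℝ) : ℝ := betaT t * (1 - Real.exp (-t)) / (betaT t + 1 - Real.exp (-t))

/-- `ĝ(t) = (1/2)[(1 + e^{−t})(1 − exp(−t/(eᵗ + 1))) − e^{−t}(1 − e^{−t})]`. -/
def gHat (t : ℝ) : ℝ :=
  (1 / 2) * ((1 + Real.exp (-t)) * (1 - Real.exp (-(t / (Real.exp t + 1)))) -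
    Real.exp (-t) * (1 - Real.exp (-t)))

end ProphetPoisson

open ProphetPoisson

lemma fHat_est {t : ℝ} (ht : 0 < t) (ht1 : t < 1/200) : |fHat t - t^2/8| ≤ 21 * t^3 := by
  have habs : |(-t)| ≤ 1 := by rw [abs_neg, abs_of_pos ht]; linarith
  have hant : |(-t)| = t := by rw [abs_neg, abs_of_pos ht]
  set s : ℝ := Real.exp (-t) with hs_def
  set ω : ℝ := 1 - s with hω_def
  have hs4 : |s - (1 - t + t^2/2 - t^3/6)| ≤ t^4 := by
    have := exp_taylor4 habs
    rw [hant] at this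
    calc |s - (1 - t + t^2/2 - t^3/6)| = |Real.exp (-t) - (1 + (-t) + (-t)^2/2 + (-t)^3/6)| := by
          rw [hs_def]; ring_nf
      _ ≤ t^4 := this
  have hslt : s < 1 - t + t^2/2 := by
    rw [abs_le] at hs4
    nlinarith [hs4.2, mul_lt_mul_of_pos_left ht1 (pow_pos ht 3)]
  have hsgt : 1 - t < s := by
    have := Real.add_one_lt_exp (x := -t) (by linarith)
    rw [← hs_def] at this; linarith
  rw [abs_le] at hs4
  clear_value ω s
  have hω4u : ω ≤ t - t^2/2 + t^3/6 + t^4 := by rw [hω_def]; linarith [hs4.1]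
  have hω4l : t - t^2/2 + t^3/6 - t^4 ≤ ω := by rw [hω_def]; linarith [hs4.2]
  have hωt : ω < t := by rw [hω_def]; linarith
  have hωhalf : t/2 ≤ ω := by nlinarith
  have hωpos : 0 < ω := by linarith
  -- γ
  set γ : ℝ := gammaT t with hγ_def
  have hγω : γ = t / ω := by rw [hγ_def, gammaT, hω_def, hs_def]
  clear_value γ
  have hγPa : |γ - (1 + t/2 + t^2/12)| ≤ 6 * t^3 := by
    have heq : γ - (1 + t/2 + t^2/12) = (t - (1 + t/2 + t^2/12) * ω) / ω := by
      rw [hγω]; field_simp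
    rw [heq, abs_div, abs_of_pos hωpos, div_le_iff₀ hωpos]
    have hnum : |t - (1 + t/2 + t^2/12) * ω| ≤ 3 * t^4 := by
      rw [abs_le]; constructor <;> nlinarith
    nlinarith [abs_nonneg (t - (1 + t/2 + t^2/12) * ω), pow_pos ht 3, pow_pos ht 4]
  have hγP := abs_le.mp hγPa
  have hγ1 : 1 < γ := by
    rw [hγω, lt_div_iff₀ hωpos]; linarith
  have hγpos : 0 < γ := by linarith
  -- x = γ - 1
  have hx0 : 0 < γ - 1 := by linarith
  have hxt : γ - 1 ≤ t := by nlinarith [hγP.2]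
  have hxhalf : γ - 1 ≤ 1/2 := by linarith
  -- log γ
  have hloga : |Real.log γ - ((γ-1) - (γ-1)^2/2)| ≤ 2 * t^3 := by
    have h := log_taylor2 hx0 hxhalf
    rw [show (1:ℝ) + (γ-1) = γ by ring] at h
    calc |Real.log γ - ((γ-1) - (γ-1)^2/2)| ≤ 2 * (γ-1)^3 := h
      _ ≤ 2 * t^3 := by nlinarith [pow_le_pow_left₀ (le_of_lt hx0) hxt 3]
  have hmid : |((γ-1) - (γ-1)^2/2) - ((t/2 + t^2/12) - (t/2 + t^2/12)^2/2)| ≤ 6 * t^3 := by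
    have heq : ((γ-1) - (γ-1)^2/2) - ((t/2 + t^2/12) - (t/2 + t^2/12)^2/2)
        = (γ - (1 + t/2 + t^2/12)) * (1 - ((γ-1) + (t/2 + t^2/12))/2) := by ring
    rw [heq, abs_mul]
    have h2 : |1 - ((γ-1) + (t/2 + t^2/12))/2| ≤ 1 := by
      rw [abs_le]; constructor <;> nlinarith
    calc |γ - (1 + t/2 + t^2/12)| * |1 - ((γ-1) + (t/2 + t^2/12))/2|
        ≤ 6 * t^3 * 1 := by
          apply mul_le_mul hγPa h2 (abs_nonneg _) (by positivity)
      _ = 6 * t^3 := by ring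
  have htail : |((t/2 + t^2/12) - (t/2 + t^2/12)^2/2) - (t/2 - t^2/24)| ≤ t^3 := by
    have heq : ((t/2 + t^2/12) - (t/2 + t^2/12)^2/2) - (t/2 - t^2/24)
        = -(t^3/24) - t^4/288 := by ring
    rw [heq, abs_le]; constructor <;> nlinarith
  have hLta : |Real.log γ - (t/2 - t^2/24)| ≤ 9 * t^3 := by
    calc |Real.log γ - (t/2 - t^2/24)|
        = |(Real.log γ - ((γ-1) - (γ-1)^2/2))
            + (((γ-1) - (γ-1)^2/2) - ((t/2 + t^2/12) - (t/2 + t^2/12)^2/2))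
            + (((t/2 + t^2/12) - (t/2 + t^2/12)^2/2) - (t/2 - t^2/24))| := by ring_nf
      _ ≤ |(Real.log γ - ((γ-1) - (γ-1)^2/2))
            + (((γ-1) - (γ-1)^2/2) - ((t/2 + t^2/12) - (t/2 + t^2/12)^2/2))|
            + |((t/2 + t^2/12) - (t/2 + t^2/12)^2/2) - (t/2 - t^2/24)| := abs_add_le _ _
      _ ≤ |Real.log γ - ((γ-1) - (γ-1)^2/2)|
            + |((γ-1) - (γ-1)^2/2) - ((t/2 + t^2/12) - (t/2 + t^2/12)^2/2)|
            + |((t/2 + t^2/12) - (t/2 + t^2/12)^2/2) - (t/2 - t^2/24)| := by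
          linarith [abs_add_le (Real.log γ - ((γ-1) - (γ-1)^2/2))
            (((γ-1) - (γ-1)^2/2) - ((t/2 + t^2/12) - (t/2 + t^2/12)^2/2))]
      _ ≤ 9 * t^3 := by linarith
  -- β
  have hβPa : |betaT t - t^2/8| ≤ 17 * t^3 := by
    have hγne : γ ≠ 0 := ne_of_gt hγpos
    have heq : betaT t - t^2/8 = ((1 - t^2/8) * γ - (1 + Real.log γ)) / γ := by
      rw [betaT, ← hγ_def]; field_simp; ring
    rw [heq, abs_div, abs_of_pos hγpos]
    have hM : |(1 - t^2/8) * γ - (1 + Real.log γ)| ≤ 17 * t^3 := by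
      have hdec : (1 - t^2/8) * γ - (1 + Real.log γ)
          = (1 - t^2/8) * (γ - (1 + t/2 + t^2/12)) - (Real.log γ - (t/2 - t^2/24))
            + (-(t^3/16) - t^4/96) := by ring
      have h1 : |(1 - t^2/8) * (γ - (1 + t/2 + t^2/12))| ≤ 6 * t^3 := by
        rw [abs_mul, abs_of_pos (by nlinarith : (0:ℝ) < 1 - t^2/8)]
        nlinarith [abs_nonneg (γ - (1 + t/2 + t^2/12))]
      have h3 : |(-(t^3/16) - t^4/96)| ≤ t^3 := by
        rw [abs_le]; constructor <;> nlinarith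
      calc |(1 - t^2/8) * γ - (1 + Real.log γ)|
          = |((1 - t^2/8) * (γ - (1 + t/2 + t^2/12)) - (Real.log γ - (t/2 - t^2/24)))
              + (-(t^3/16) - t^4/96)| := by rw [hdec]
        _ ≤ |(1 - t^2/8) * (γ - (1 + t/2 + t^2/12)) - (Real.log γ - (t/2 - t^2/24))|
              + |(-(t^3/16) - t^4/96)| := abs_add_le _ _
        _ ≤ |(1 - t^2/8) * (γ - (1 + t/2 + t^2/12))| + |Real.log γ - (t/2 - t^2/24)|
              + |(-(t^3/16) - t^4/96)| := by
            linarith [abs_sub ((1 - t^2/8) * (γ - (1 + t/2 + t^2/12)))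
              (Real.log γ - (t/2 - t^2/24))]
        _ ≤ 17 * t^3 := by linarith
    exact le_trans (div_le_self (abs_nonneg _) (by linarith)) hM
  have hβP := abs_le.mp hβPa
  have hβpos : 0 < betaT t := by nlinarith [hβP.1]
  have hβle : betaT t ≤ t^2 := by nlinarith [hβP.2]
  have hDpos : 0 < betaT t + 1 - s := by
    have : (1:ℝ) - s > 0 := by rw [← hω_def]; exact hωpos
    linarith
  have hD2 : t/2 ≤ betaT t + 1 - s := by
    have : t/2 ≤ 1 - s := by rw [← hω_def]; exact hωhalf
    linarith
  clear hloga hmid htail hγPa hLta hs4 hβPa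
  have hfβ : |fHat t - betaT t| ≤ 2 * t^3 := by
    have hDne : betaT t + 1 - s ≠ 0 := ne_of_gt hDpos
    have heq : fHat t - betaT t = -(betaT t)^2 / (betaT t + 1 - s) := by
      rw [fHat, ← hs_def]
      field_simp
      ring
    rw [heq, abs_div, abs_of_pos hDpos, div_le_iff₀ hDpos]
    have h1 : |(-(betaT t)^2)| = (betaT t)^2 := by rw [abs_neg, abs_of_nonneg (sq_nonneg _)]
    rw [h1]
    have e1 : betaT t * betaT t ≤ t^2 * t^2 := mul_self_le_mul_self hβpos.le hβle
    have e2 : 2*t^3*(t/2) ≤ 2*t^3*(betaT t + 1 - s) :=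
      mul_le_mul_of_nonneg_left hD2 (by positivity)
    have e3 : t^2*t^2 = 2*t^3*(t/2) := by ring
    rw [pow_two]
    linarith [e1, e2, e3]
  have hfβ' := abs_le.mp hfβ
  rw [abs_le]; constructor <;> linarith [hβP.1, hβP.2, hfβ'.1, hfβ'.2]

lemma abs_add3 (a b c : ℝ) : |a + b + c| ≤ |a| + |b| + |c| := by
  calc |a+b+c| ≤ |a+b| + |c| := abs_add_le _ _
    _ ≤ |a|+|b|+|c| := by linarith [abs_add_le a b]

lemma gHat_est {t : ℝ} (ht : 0 < t) (ht1 : t < 1/200) : |gHat t - t^2/8| ≤ 5 * t^3 := by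
  have habs : |(-t)| ≤ 1 := by rw [abs_neg, abs_of_pos ht]; linarith
  have habs' : |t| ≤ 1 := by rw [abs_of_pos ht]; linarith
  have hant : |(-t)| = t := by rw [abs_neg, abs_of_pos ht]
  set s : ℝ := Real.exp (-t) with hs_def
  have hs3a : |s - (1 - t + t^2/2)| ≤ t^3 := by
    have := exp_taylor3 habs
    rw [hant] at this
    calc |s - (1 - t + t^2/2)| = |Real.exp (-t) - (1 + (-t) + (-t)^2/2)| := by rw [hs_def]; ring_nf
      _ ≤ t^3 := this
  have hs0 : 0 < s := Real.exp_pos _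
  have hs1 : s ≤ 1 := Real.exp_le_one_iff.mpr (by linarith)
  clear_value s
  have hs3 := abs_le.mp hs3a
  have hexpta : |Real.exp t - (1 + t + t^2/2)| ≤ t^3 := by
    have := exp_taylor3 habs'
    rwa [abs_of_pos ht] at this
  have hexpt := abs_le.mp hexpta
  have het1 : 1 ≤ Real.exp t := Real.one_le_exp (le_of_lt ht)
  have hden2 : (2:ℝ) ≤ Real.exp t + 1 := by linarith
  have hdenpos : (0:ℝ) < Real.exp t + 1 := by linarith
  set u : ℝ := t / (Real.exp t + 1) with hu_def
  clear_value u
  have hu0 : 0 < u := by rw [hu_def]; positivity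
  have hut : u ≤ t/2 := by
    rw [hu_def, div_le_iff₀ hdenpos]; nlinarith
  have huba : |u - (t/2 - t^2/4)| ≤ t^3 := by
    have heq : u - (t/2 - t^2/4) = (t - (t/2 - t^2/4) * (Real.exp t + 1)) / (Real.exp t + 1) := by
      rw [hu_def]; field_simp
    rw [heq, abs_div, abs_of_pos hdenpos, div_le_iff₀ hdenpos]
    have hc : 0 ≤ t/2 - t^2/4 := by nlinarith
    have hnum : |t - (t/2 - t^2/4) * (Real.exp t + 1)| ≤ t^4 := by
      rw [abs_le]
      constructor <;> nlinarith [mul_le_mul_of_nonneg_left hexpt.2 hc,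
        mul_le_mul_of_nonneg_left hexpt.1 hc]
    nlinarith [abs_nonneg (t - (t/2 - t^2/4) * (Real.exp t + 1)), pow_pos ht 3, pow_pos ht 4]
  have hub := abs_le.mp huba
  have huabs : |(-u)| ≤ 1 := by rw [abs_neg, abs_of_pos hu0]; linarith
  have hEua : |Real.exp (-u) - (1 - u + u^2/2)| ≤ t^3/8 := by
    have h := exp_taylor3 huabs
    rw [abs_neg, abs_of_pos hu0] at h
    calc |Real.exp (-u) - (1 - u + u^2/2)| = |Real.exp (-u) - (1 + (-u) + (-u)^2/2)| := by ring_nf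
      _ ≤ u^3 := h
      _ ≤ t^3/8 := by nlinarith [pow_le_pow_left₀ (le_of_lt hu0) hut 3]
  have hEu := abs_le.mp hEua
  set v : ℝ := 1 - Real.exp (-u) with hv_def
  have hv0 : 0 ≤ v := by
    rw [hv_def]
    have : Real.exp (-u) ≤ 1 := Real.exp_le_one_iff.mpr (by linarith)
    linarith
  have hvu : v ≤ u := by
    rw [hv_def]
    have := Real.add_one_le_exp (-u)
    linarith
  clear_value v
  have hvle : v ≤ t/2 := le_trans hvu hut
  have hva : |v - (t/2 - 3*t^2/8)| ≤ 2 * t^3 := by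
    rw [abs_le]
    constructor <;> nlinarith [hEu.1, hEu.2, hub.1, hub.2, sq_nonneg (u - (t/2 - t^2/4))]
  have hv := abs_le.mp hva
  -- A = (1+s)*v
  have ha1 : |(s - (1 - t + t^2/2)) * v| ≤ t^3 := by
    rw [abs_mul]
    have h2 : |v| ≤ 1 := by rw [abs_of_nonneg hv0]; linarith
    calc |s - (1 - t + t^2/2)| * |v| ≤ t^3 * 1 :=
          mul_le_mul hs3a h2 (abs_nonneg _) (by positivity)
      _ = t^3 := by ring
  have ha2 : |(2 - t + t^2/2) * (v - (t/2 - 3*t^2/8))| ≤ 4 * t^3 := by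
    rw [abs_mul]
    have h2 : |2 - t + t^2/2| ≤ 2 := by rw [abs_le]; constructor <;> nlinarith
    calc |2 - t + t^2/2| * |v - (t/2 - 3*t^2/8)| ≤ 2 * (2 * t^3) :=
          mul_le_mul h2 hva (abs_nonneg _) (by norm_num)
      _ = 4 * t^3 := by ring
  have ha3 : |(2 - t + t^2/2) * (t/2 - 3*t^2/8) - (t - 5*t^2/4)| ≤ t^3 := by
    have heq : (2 - t + t^2/2) * (t/2 - 3*t^2/8) - (t - 5*t^2/4)
        = 5*t^3/8 - 3*t^4/16 := by ring
    rw [heq, abs_le]; constructor <;> nlinarith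
  have hA : |(1 + s) * v - (t - 5*t^2/4)| ≤ 6 * t^3 := by
    have hdec : (1 + s) * v - (t - 5*t^2/4)
        = (s - (1 - t + t^2/2)) * v + (2 - t + t^2/2) * (v - (t/2 - 3*t^2/8))
          + ((2 - t + t^2/2) * (t/2 - 3*t^2/8) - (t - 5*t^2/4)) := by ring
    rw [hdec]
    calc _ ≤ _ := abs_add3 _ _ _
      _ ≤ 6 * t^3 := by linarith
  -- B = s * (1 - s)
  have hb1 : |(s - (1 - t + t^2/2)) * (1 - s)| ≤ t^3 := by
    rw [abs_mul]
    have h2 : |1 - s| ≤ 1 := by rw [abs_le]; constructor <;> linarith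
    calc |s - (1 - t + t^2/2)| * |1 - s| ≤ t^3 * 1 :=
          mul_le_mul hs3a h2 (abs_nonneg _) (by positivity)
      _ = t^3 := by ring
  have hb2 : |(1 - t + t^2/2) * ((1 - s) - (t - t^2/2))| ≤ t^3 := by
    rw [abs_mul]
    have h2 : |1 - t + t^2/2| ≤ 1 := by rw [abs_le]; constructor <;> nlinarith
    have h3 : |(1 - s) - (t - t^2/2)| ≤ t^3 := by
      rw [abs_le]; constructor <;> linarith [hs3.1, hs3.2]
    calc |1 - t + t^2/2| * |(1 - s) - (t - t^2/2)| ≤ 1 * t^3 :=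
          mul_le_mul h2 h3 (abs_nonneg _) (by norm_num)
      _ = t^3 := by ring
  have hb3 : |(1 - t + t^2/2) * (t - t^2/2) - (t - 3*t^2/2)| ≤ t^3 := by
    have heq : (1 - t + t^2/2) * (t - t^2/2) - (t - 3*t^2/2) = t^3 - t^4/4 := by ring
    rw [heq, abs_le]; constructor <;> nlinarith
  have hB : |s * (1 - s) - (t - 3*t^2/2)| ≤ 3 * t^3 := by
    have hdec : s * (1 - s) - (t - 3*t^2/2)
        = (s - (1 - t + t^2/2)) * (1 - s) + (1 - t + t^2/2) * ((1 - s) - (t - t^2/2))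
          + ((1 - t + t^2/2) * (t - t^2/2) - (t - 3*t^2/2)) := by ring
    rw [hdec]
    calc _ ≤ _ := abs_add3 _ _ _
      _ ≤ 3 * t^3 := by linarith
  have hA' := abs_le.mp hA
  have hB' := abs_le.mp hB
  have hgeq : gHat t = (1/2) * ((1 + s) * v - s * (1 - s)) := by
    rw [gHat, ← hs_def, ← hu_def, ← hv_def]
  rw [hgeq, abs_le]
  constructor <;> linarith [hA'.1, hA'.2, hB'.1, hB'.2]

open ProphetPoisson in
/-- `f̂(t) − ĝ(t) = O(t³)` as `t ↓ 0`. -/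
theorem fHat_sub_gHat_isBigO_t_cube :
    ∃ C δ : ℝ, 0 < C ∧ 0 < δ ∧ ∀ t : ℝ, 0 < t → t < δ →
      |fHat t - gHat t| ≤ C * t ^ 3 := by
  refine ⟨30, 1/200, by norm_num, by norm_num, fun t ht htδ => ?_⟩
  have hf := abs_le.mp (fHat_est ht htδ)
  have hg := abs_le.mp (gHat_est ht htδ)
  rw [abs_le]
  constructor <;> nlinarith [hf.1, hf.2, hg.1, hg.2]
end
end
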